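/- arXiv:1203.3691 — 3 statements merged into one kernel-verified Lean document; each statement's English description precedes it below -/
import Mathlib

section
/- Let b = exp(−iπ/3), let j₆(u,v) = (2−8b)u³ − b·u⁶ + 6uv + 6b·u⁴v − (9/2)u²v², and define J₆ : ℝ² → ℝ by J₆(x,y) = −1 + 2·Re(j₆(x+iy, x−iy)). Identify ℝ² with ℂ via (x,y) ↦ x+iy, and set α = exp(iπ/9), r = exp(2πi/3). Then at each of the seven points 0, α, rα, r²α, 2, 2r, 2r² the gradient of J₆ vanishes and J₆ takes the value −1; and at each of the three points conj(α), conj(rα), conj(r²α) the gradient of J₆ vanishes and J₆ takes the value 8. -/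
noncomputable section

/-- `bC = exp(-iπ/3)`. -/
def bC : ℂ := Complex.exp (-((Real.pi : ℂ) / 3) * Complex.I)

/-- The polynomial `j6(u,v)`. -/
def j6 (u v : ℂ) : ℂ := (2 - 8*bC)*u^3 - bC*u^6 + 6*u*v + 6*bC*u^4*v - (9/2)*u^2*v^2

/-- The real folding-type polynomial `J6(x,y) = -1 + 2 Re(j6(x+iy, x-iy))`, as a
function on `ℝ × ℝ`. -/
def J6 : ℝ × ℝ → ℝ := fun p =>
  -1 + 2 * (j6 ((p.1 : ℂ) + (p.2 : ℂ) * Complex.I) ((p.1 : ℂ) - (p.2 : ℂ) * Complex.I)).re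

/-- Partial derivative in the first variable. -/
def pdx (f : ℝ × ℝ → ℝ) (p : ℝ × ℝ) : ℝ := deriv (fun t => f (t, p.2)) p.1

/-- Partial derivative in the second variable. -/
def pdy (f : ℝ × ℝ → ℝ) (p : ℝ × ℝ) : ℝ := deriv (fun t => f (p.1, t)) p.2

/-- Determinant of the Hessian matrix of `f` at `p`. -/
def hessDet2 (f : ℝ × ℝ → ℝ) (p : ℝ × ℝ) : ℝ :=
  pdx (pdx f) p * pdy (pdy f) p - pdx (pdy f) p * pdy (pdx f) p

/-- `α = exp(iπ/9)`. -/
def α : ℂ := Complex.exp ((Real.pi : ℂ) / 9 * Complex.I)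

/-- `r = exp(2πi/3)`. -/
def r : ℂ := Complex.exp (2 * (Real.pi : ℂ) / 3 * Complex.I)

open Complex


lemma hI : (Complex.I)^2 = -1 := Complex.I_sq

lemma alpha_cube : α^3 = Complex.exp ((Real.pi:ℂ)/3 * Complex.I) := by
  rw [α, ← Complex.exp_nat_mul]
  congr 1
  push_cast
  ring

lemma exp_pi3 : Complex.exp ((Real.pi:ℂ)/3 * Complex.I) = 1/2 + (Real.sqrt 3 : ℝ)/2 * Complex.I := by
  rw [show ((Real.pi:ℂ)/3) = ((Real.pi/3 : ℝ) : ℂ) by push_cast; ring,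
    Complex.exp_mul_I, ← Complex.ofReal_cos, ← Complex.ofReal_sin,
    Real.cos_pi_div_three, Real.sin_pi_div_three]
  push_cast
  ring

lemma hsq3 : ((Real.sqrt 3 : ℝ) : ℂ)^2 = 3 := by
  rw [← Complex.ofReal_pow, Real.sq_sqrt (by norm_num : (3:ℝ) ≥ 0)]
  norm_num

lemma h1 : α^6 = α^3 - 1 := by
  have h3 := alpha_cube.trans exp_pi3
  have : α^6 = (α^3)^2 := by ring
  rw [this, h3]
  linear_combination (Complex.I^2/4) * hsq3 + (3/4) * hI

lemma hb : bC = 1 - α^3 := by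
  have : bC = 1/2 - (Real.sqrt 3 : ℝ)/2 * Complex.I := by
    rw [bC, show (-(((Real.pi:ℂ))/3)*Complex.I) = ((-(Real.pi/3) : ℝ):ℂ)*Complex.I by push_cast; ring,
      Complex.exp_mul_I, ← Complex.ofReal_cos, ← Complex.ofReal_sin,
      Real.cos_neg, Real.sin_neg, Real.cos_pi_div_three, Real.sin_pi_div_three]
    push_cast
    ring
  rw [this, alpha_cube.trans exp_pi3]
  ring

lemma hr : r = α^3 - 1 := by
  have h6 : r = α^6 := by
    rw [r, α, ← Complex.exp_nat_mul]
    congr 1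
    push_cast
    ring
  rw [h6, h1]

lemma h2 : α * (starRingEnd ℂ) α = 1 := by
  have habs : ‖α‖ = 1 := by
    rw [α, show ((Real.pi:ℂ)/9*Complex.I) = ((Real.pi/9:ℝ):ℂ)*Complex.I by push_cast; ring]
    exact Complex.norm_exp_ofReal_mul_I _
  rw [Complex.mul_conj, Complex.normSq_eq_norm_sq, habs]
  norm_num

lemma hB : (starRingEnd ℂ) α = α^2 - α^5 := by
  have h3 : α * (α^2 - α^5) = 1 := by linear_combination -h1
  calc (starRingEnd ℂ) α = (starRingEnd ℂ) α * (α * (α^2 - α^5)) := by rw [h3, mul_one]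
    _ = (α * (starRingEnd ℂ) α) * (α^2 - α^5) := by ring
    _ = α^2 - α^5 := by rw [h2, one_mul]


def j6u (u v : ℂ) : ℂ := 3*(2 - 8*bC)*u^2 - 6*bC*u^5 + 6*v + 24*bC*u^3*v - 9*u*v^2
def j6v (u v : ℂ) : ℂ := 6*u + 6*bC*u^4 - 9*u^2*v

lemma hasDerivAt_j6 {f g : ℂ → ℂ} {f' g' : ℂ} {w : ℂ}
    (hf : HasDerivAt f f' w) (hg : HasDerivAt g g' w) :
    HasDerivAt (fun w => j6 (f w) (g w))
      (j6u (f w) (g w) * f' + j6v (f w) (g w) * g') w := by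
  have h1 := HasDerivAt.const_mul (2 - 8*bC) (hf.pow 3)
  have h2 := HasDerivAt.const_mul bC (hf.pow 6)
  have h3 := HasDerivAt.const_mul (6:ℂ) (hf.mul hg)
  have h4 := HasDerivAt.const_mul (6*bC) ((hf.pow 4).mul hg)
  have h5 := HasDerivAt.const_mul ((9:ℂ)/2) ((hf.pow 2).mul (hg.pow 2))
  have H := (((h1.sub h2).add h3).add h4).sub h5
  have hd : j6u (f w) (g w) * f' + j6v (f w) (g w) * g' =
      ((2 - 8 * bC) * (↑(3:ℕ) * f w ^ (3 - 1) * f') - bC * (↑(6:ℕ) * f w ^ (6 - 1) * f') +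
        6 * (f' * g w + f w * g') +
        6 * bC * (↑(4:ℕ) * f w ^ (4 - 1) * f' * g w + f w ^ 4 * g') -
      9 / 2 * (↑(2:ℕ) * f w ^ (2 - 1) * f' * g w ^ 2 + f w ^ 2 * (↑(2:ℕ) * g w ^ (2 - 1) * g'))) := by
    simp only [j6u, j6v]
    push_cast
    ring
  rw [hd]
  exact H.congr_of_eventuallyEq (Filter.Eventually.of_forall (fun y => by simp only [j6, Pi.add_apply, Pi.sub_apply, Pi.mul_apply, Pi.pow_apply]; ring))

lemma pdx_eq (x y : ℝ) : pdx J6 (x, y) =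
    2 * ((j6u ((x:ℂ) + (y:ℂ)*Complex.I) ((x:ℂ) - (y:ℂ)*Complex.I)
        + j6v ((x:ℂ) + (y:ℂ)*Complex.I) ((x:ℂ) - (y:ℂ)*Complex.I)).re) := by
  have hf : HasDerivAt (fun w : ℂ => w + (y:ℂ)*Complex.I) 1 (x:ℂ) :=
    (hasDerivAt_id ((x:ℂ))).add_const _
  have hg : HasDerivAt (fun w : ℂ => w - (y:ℂ)*Complex.I) 1 (x:ℂ) :=
    (hasDerivAt_id ((x:ℂ))).sub_const _
  have H := (hasDerivAt_j6 hf hg).real_of_complex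
  have H2 := HasDerivAt.const_add (-1:ℝ) (HasDerivAt.const_mul (2:ℝ) H)
  have H3 : HasDerivAt (fun t : ℝ => J6 (t, y)) _ x := H2
  rw [show pdx J6 (x, y) = deriv (fun t : ℝ => J6 (t, y)) x from rfl, H3.deriv]
  simp only [mul_one]

lemma pdy_eq (x y : ℝ) : pdy J6 (x, y) =
    2 * ((j6u ((x:ℂ) + (y:ℂ)*Complex.I) ((x:ℂ) - (y:ℂ)*Complex.I) * Complex.I
        + j6v ((x:ℂ) + (y:ℂ)*Complex.I) ((x:ℂ) - (y:ℂ)*Complex.I) * (-Complex.I)).re) := by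
  have hf : HasDerivAt (fun w : ℂ => (x:ℂ) + w*Complex.I) Complex.I (y:ℂ) := by
    simpa using HasDerivAt.const_add (x:ℂ) ((hasDerivAt_id ((y:ℂ))).mul_const Complex.I)
  have hg : HasDerivAt (fun w : ℂ => (x:ℂ) - w*Complex.I) (-Complex.I) (y:ℂ) := by
    simpa using HasDerivAt.const_sub (x:ℂ) ((hasDerivAt_id ((y:ℂ))).mul_const Complex.I)
  have H := (hasDerivAt_j6 hf hg).real_of_complex
  have H2 := HasDerivAt.const_add (-1:ℝ) (HasDerivAt.const_mul (2:ℝ) H)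
  have H3 : HasDerivAt (fun t : ℝ => J6 (x, t)) _ y := H2
  rw [show pdy J6 (x, y) = deriv (fun t : ℝ => J6 (x, t)) y from rfl, H3.deriv]

lemma re_sub_im (z : ℂ) : (z.re : ℂ) - (z.im : ℂ) * Complex.I = (starRingEnd ℂ) z := by
  apply Complex.ext <;> simp

lemma re_eq' {w : ℂ} {t : ℝ} (h : w + (starRingEnd ℂ) w = ((2*t : ℝ) : ℂ)) : w.re = t := by
  have h2 := (Complex.add_conj w).symm.trans h
  have h3 : (2*w.re : ℝ) = 2*t := by exact_mod_cast h2
  linarith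


set_option maxHeartbeats 2000000 in
/-- At each of `0, α, rα, r²α, 2, 2r, 2r²` the gradient of `J₆` vanishes and `J₆ = -1`;
at each of the conjugates of `α, rα, r²α` the gradient of `J₆` vanishes and `J₆ = 8`. -/
theorem stmt1 :
    (∀ z ∈ ({0, α, r * α, r ^ 2 * α, 2, 2 * r, 2 * r ^ 2} : Set ℂ),
      pdx J6 (z.re, z.im) = 0 ∧ pdy J6 (z.re, z.im) = 0 ∧ J6 (z.re, z.im) = -1) ∧
    (∀ z ∈ ({(starRingEnd ℂ) α, (starRingEnd ℂ) (r * α), (starRingEnd ℂ) (r ^ 2 * α)} :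
        Set ℂ),
      pdx J6 (z.re, z.im) = 0 ∧ pdy J6 (z.re, z.im) = 0 ∧ J6 (z.re, z.im) = 8) := by
  constructor
  · rintro z hz
    simp only [Set.mem_insert_iff, Set.mem_singleton_iff] at hz
    rcases hz with rfl | rfl | rfl | rfl | rfl | rfl | rfl
    · refine ⟨?_, ?_, ?_⟩
      · rw [pdx_eq, Complex.re_add_im, re_sub_im]
        have h0 : (j6u (0 : ℂ) ((starRingEnd ℂ) (0 : ℂ)) + j6v (0 : ℂ) ((starRingEnd ℂ) (0 : ℂ))).re = 0 :=
          re_eq' (by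
            simp only [j6u, j6v, j6, hr, hb, map_add, map_sub, map_mul, map_pow, map_one,
              map_zero, map_ofNat, map_div₀, map_neg, Complex.conj_conj, Complex.conj_I]
            simp only [hB]
            push_cast
            linear_combination (0:ℂ) * h1)
        rw [h0]
        norm_num
      · rw [pdy_eq, Complex.re_add_im, re_sub_im]
        have h0 : (j6u (0 : ℂ) ((starRingEnd ℂ) (0 : ℂ)) * Complex.I
            + j6v (0 : ℂ) ((starRingEnd ℂ) (0 : ℂ)) * (-Complex.I)).re = 0 :=
          re_eq' (by
            simp only [j6u, j6v, j6, hr, hb, map_add, map_sub, map_mul, map_pow, map_one,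
              map_zero, map_ofNat, map_div₀, map_neg, Complex.conj_conj, Complex.conj_I]
            simp only [hB]
            push_cast
            linear_combination (0:ℂ) * h1)
        rw [h0]
        norm_num
      · have hJ : J6 (((0 : ℂ)).re, ((0 : ℂ)).im) = -1 + 2 * ((j6 ((((0 : ℂ)).re : ℂ) + (((0 : ℂ)).im : ℂ) * Complex.I)
            ((((0 : ℂ)).re : ℂ) - (((0 : ℂ)).im : ℂ) * Complex.I)).re) := rfl
        rw [hJ, Complex.re_add_im, re_sub_im]
        have h0 : (j6 (0 : ℂ) ((starRingEnd ℂ) (0 : ℂ))).re = (0:ℝ) :=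
          re_eq' (by
            simp only [j6u, j6v, j6, hr, hb, map_add, map_sub, map_mul, map_pow, map_one,
              map_zero, map_ofNat, map_div₀, map_neg, Complex.conj_conj, Complex.conj_I]
            simp only [hB]
            push_cast
            linear_combination (0:ℂ) * h1)
        rw [h0]
        norm_num
    · refine ⟨?_, ?_, ?_⟩
      · rw [pdx_eq, Complex.re_add_im, re_sub_im]
        have h0 : (j6u (α : ℂ) ((starRingEnd ℂ) (α : ℂ)) + j6v (α : ℂ) ((starRingEnd ℂ) (α : ℂ))).re = 0 :=
          re_eq' (by
            simp only [j6u, j6v, j6, hr, hb, map_add, map_sub, map_mul, map_pow, map_one,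
              map_zero, map_ofNat, map_div₀, map_neg, Complex.conj_conj, Complex.conj_I]
            simp only [hB]
            push_cast
            linear_combination ((12:ℂ)*α + (-6:ℂ)*α^2 + (-18:ℂ)*α^4 + (6:ℂ)*α^5 + (42:ℂ)*α^7 + (12:ℂ)*α^8 + (-12:ℂ)*α^10 + (-12:ℂ)*α^11 + (-96:ℂ)*α^13 + (6:ℂ)*α^14 + (222:ℂ)*α^16 + (36:ℂ)*α^17 + (-270:ℂ)*α^19 + (-90:ℂ)*α^20 + (246:ℂ)*α^22 + (84:ℂ)*α^23 + (-198:ℂ)*α^25 + (-36:ℂ)*α^26 + (120:ℂ)*α^28 + (6:ℂ)*α^29 + (-42:ℂ)*α^31 + (6:ℂ)*α^34) * h1)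
        rw [h0]
        norm_num
      · rw [pdy_eq, Complex.re_add_im, re_sub_im]
        have h0 : (j6u (α : ℂ) ((starRingEnd ℂ) (α : ℂ)) * Complex.I
            + j6v (α : ℂ) ((starRingEnd ℂ) (α : ℂ)) * (-Complex.I)).re = 0 :=
          re_eq' (by
            simp only [j6u, j6v, j6, hr, hb, map_add, map_sub, map_mul, map_pow, map_one,
              map_zero, map_ofNat, map_div₀, map_neg, Complex.conj_conj, Complex.conj_I]
            simp only [hB]
            push_cast
            linear_combination ((-12:ℂ)*α*Complex.I + (-6:ℂ)*α^2*Complex.I + (18:ℂ)*α^4*Complex.I + (6:ℂ)*α^5*Complex.I + (-42:ℂ)*α^7*Complex.I + (12:ℂ)*α^8*Complex.I + (12:ℂ)*α^10*Complex.I + (-12:ℂ)*α^11*Complex.I + (96:ℂ)*α^13*Complex.I + (6:ℂ)*α^14*Complex.I + (-222:ℂ)*α^16*Complex.I + (36:ℂ)*α^17*Complex.I + (270:ℂ)*α^19*Complex.I + (-90:ℂ)*α^20*Complex.I + (-246:ℂ)*α^22*Complex.I + (84:ℂ)*α^23*Complex.I + (198:ℂ)*α^25*Complex.I + (-36:ℂ)*α^26*Complex.I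 + (-120:ℂ)*α^28*Complex.I + (6:ℂ)*α^29*Complex.I + (42:ℂ)*α^31*Complex.I + (-6:ℂ)*α^34*Complex.I) * h1)
        rw [h0]
        norm_num
      · have hJ : J6 (((α : ℂ)).re, ((α : ℂ)).im) = -1 + 2 * ((j6 ((((α : ℂ)).re : ℂ) + (((α : ℂ)).im : ℂ) * Complex.I)
            ((((α : ℂ)).re : ℂ) - (((α : ℂ)).im : ℂ) * Complex.I)).re) := rfl
        rw [hJ, Complex.re_add_im, re_sub_im]
        have h0 : (j6 (α : ℂ) ((starRingEnd ℂ) (α : ℂ))).re = (0:ℝ) :=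
          re_eq' (by
            simp only [j6u, j6v, j6, hr, hb, map_add, map_sub, map_mul, map_pow, map_one,
              map_zero, map_ofNat, map_div₀, map_neg, Complex.conj_conj, Complex.conj_I]
            simp only [hB]
            push_cast
            linear_combination ((6:ℂ)*α^3 + (-8:ℂ)*α^6 + (17:ℂ)*α^9 + (-13:ℂ)*α^12 + (-36:ℂ)*α^15 + (101:ℂ)*α^18 + (-132:ℂ)*α^21 + (118:ℂ)*α^24 + (-86:ℂ)*α^27 + (55:ℂ)*α^30 + (-27:ℂ)*α^33 + (8:ℂ)*α^36 + (-1:ℂ)*α^39) * h1)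
        rw [h0]
        norm_num
    · refine ⟨?_, ?_, ?_⟩
      · rw [pdx_eq, Complex.re_add_im, re_sub_im]
        have h0 : (j6u (r * α : ℂ) ((starRingEnd ℂ) (r * α : ℂ)) + j6v (r * α : ℂ) ((starRingEnd ℂ) (r * α : ℂ))).re = 0 :=
          re_eq' (by
            simp only [j6u, j6v, j6, hr, hb, map_add, map_sub, map_mul, map_pow, map_one,
              map_zero, map_ofNat, map_div₀, map_neg, Complex.conj_conj, Complex.conj_I]
            simp only [hB]
            push_cast
            linear_combination ((-12:ℂ)*α + (-30:ℂ)*α^2 + (6:ℂ)*α^4 + (90:ℂ)*α^5 + (-6:ℂ)*α^7 + (-138:ℂ)*α^8 + (36:ℂ)*α^10 + (48:ℂ)*α^11 + (-210:ℂ)*α^13 + (294:ℂ)*α^14 + (648:ℂ)*α^16 + (-600:ℂ)*α^17 + (-480:ℂ)*α^19 + (396:ℂ)*α^20 + (-1890:ℂ)*α^22 + (-120:ℂ)*α^23 + (6114:ℂ)*α^25 + (1122:ℂ)*α^26 + (-7020:ℂ)*α^28 + (-2988:ℂ)*α^29 + (-2448:ℂ)*α^31 + (1554:ℂ)*α^32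 + (19386:ℂ)*α^34 + (7620:ℂ)*α^35 + (-23388:ℂ)*α^37 + (-21288:ℂ)*α^38 + (-5292:ℂ)*α^40 + (24588:ℂ)*α^41 + (45660:ℂ)*α^43 + (-828:ℂ)*α^44 + (-24768:ℂ)*α^46 + (-48282:ℂ)*α^47 + (-112092:ℂ)*α^49 + (92370:ℂ)*α^50 + (288588:ℂ)*α^52 + (-89880:ℂ)*α^53 + (-280572:ℂ)*α^55 + (23898:ℂ)*α^56 + (-110682:ℂ)*α^58 + (77586:ℂ)*α^59 + (805440:ℂ)*α^61 + (-160344:ℂ)*α^62 + (-1378452:ℂ)*α^64 + (185358:ℂ)*α^65 + (1323246:ℂ)*α^67 + (-153966:ℂ)*α^68 + (-464274:ℂ)*α^70 + (97368:ℂ)*α^71 + (-855420:ℂ)*α^73 + (-47394:ℂ)*α^74 + (1999146:ℂ)*α^76 + (17550:ℂ)*α^77 + (-2479398:ℂ)*α^79 + (-4794:ℂ)*α^80 + (2240094:ℂ)*α^82 + (912:ℂ)*α^83 + (-1586850:ℂ)*α^85 + (-108:ℂ)*α^86 + (901776:ℂ)*α^88 + (6:ℂ)*α^89 + (-412218:ℂ)*α^91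 + (150108:ℂ)*α^94 + (-42636:ℂ)*α^97 + (9114:ℂ)*α^100 + (-1380:ℂ)*α^103 + (132:ℂ)*α^106 + (-6:ℂ)*α^109) * h1)
        rw [h0]
        norm_num
      · rw [pdy_eq, Complex.re_add_im, re_sub_im]
        have h0 : (j6u (r * α : ℂ) ((starRingEnd ℂ) (r * α : ℂ)) * Complex.I
            + j6v (r * α : ℂ) ((starRingEnd ℂ) (r * α : ℂ)) * (-Complex.I)).re = 0 :=
          re_eq' (by
            simp only [j6u, j6v, j6, hr, hb, map_add, map_sub, map_mul, map_pow, map_one,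
              map_zero, map_ofNat, map_div₀, map_neg, Complex.conj_conj, Complex.conj_I]
            simp only [hB]
            push_cast
            linear_combination ((12:ℂ)*α*Complex.I + (-30:ℂ)*α^2*Complex.I + (-6:ℂ)*α^4*Complex.I + (90:ℂ)*α^5*Complex.I + (6:ℂ)*α^7*Complex.I + (-138:ℂ)*α^8*Complex.I + (-36:ℂ)*α^10*Complex.I + (48:ℂ)*α^11*Complex.I + (210:ℂ)*α^13*Complex.I + (294:ℂ)*α^14*Complex.I + (-648:ℂ)*α^16*Complex.I + (-600:ℂ)*α^17*Complex.I + (480:ℂ)*α^19*Complex.I + (396:ℂ)*α^20*Complex.I + (1890:ℂ)*α^22*Complex.I + (-120:ℂ)*α^23*Complex.I + (-6114:ℂ)*α^25*Complex.I + (1122:ℂ)*α^26*Complex.I + (7020:ℂ)*α^28*Complex.I + (-2988:ℂ)*α^29*Complex.I + (2448:ℂ)*α^31*Complex.I + (1554:ℂ)*α^32*Complex.I + (-19386:ℂ)*α^34*Complex.I + (7620:ℂ)*α^35*Complex.I + (23388:ℂ)*α^37*Complex.I + (-21288:ℂ)*α^38*Complex.I + (5292:ℂ)*α^40*Complex.I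 + (24588:ℂ)*α^41*Complex.I + (-45660:ℂ)*α^43*Complex.I + (-828:ℂ)*α^44*Complex.I + (24768:ℂ)*α^46*Complex.I + (-48282:ℂ)*α^47*Complex.I + (112092:ℂ)*α^49*Complex.I + (92370:ℂ)*α^50*Complex.I + (-288588:ℂ)*α^52*Complex.I + (-89880:ℂ)*α^53*Complex.I + (280572:ℂ)*α^55*Complex.I + (23898:ℂ)*α^56*Complex.I + (110682:ℂ)*α^58*Complex.I + (77586:ℂ)*α^59*Complex.I + (-805440:ℂ)*α^61*Complex.I + (-160344:ℂ)*α^62*Complex.I + (1378452:ℂ)*α^64*Complex.I + (185358:ℂ)*α^65*Complex.I + (-1323246:ℂ)*α^67*Complex.I + (-153966:ℂ)*α^68*Complex.I + (464274:ℂ)*α^70*Complex.I + (97368:ℂ)*α^71*Complex.I + (855420:ℂ)*α^73*Complex.I + (-47394:ℂ)*α^74*Complex.I + (-1999146:ℂ)*α^76*Complex.I + (17550:ℂ)*α^77*Complex.I + (2479398:ℂ)*α^79*Complex.I + (-4794:ℂ)*α^80*Complex.I + (-2240094:ℂ)*α^82*Complex.I + (912:ℂ)*α^83*Complex.I + (1586850:ℂ)*α^85*Complex.I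 + (-108:ℂ)*α^86*Complex.I + (-901776:ℂ)*α^88*Complex.I + (6:ℂ)*α^89*Complex.I + (412218:ℂ)*α^91*Complex.I + (-150108:ℂ)*α^94*Complex.I + (42636:ℂ)*α^97*Complex.I + (-9114:ℂ)*α^100*Complex.I + (1380:ℂ)*α^103*Complex.I + (-132:ℂ)*α^106*Complex.I + (6:ℂ)*α^109*Complex.I) * h1)
        rw [h0]
        norm_num
      · have hJ : J6 (((r * α : ℂ)).re, ((r * α : ℂ)).im) = -1 + 2 * ((j6 ((((r * α : ℂ)).re : ℂ) + (((r * α : ℂ)).im : ℂ) * Complex.I)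
            ((((r * α : ℂ)).re : ℂ) - (((r * α : ℂ)).im : ℂ) * Complex.I)).re) := rfl
        rw [hJ, Complex.re_add_im, re_sub_im]
        have h0 : (j6 (r * α : ℂ) ((starRingEnd ℂ) (r * α : ℂ))).re = (0:ℝ) :=
          re_eq' (by
            simp only [j6u, j6v, j6, hr, hb, map_add, map_sub, map_mul, map_pow, map_one,
              map_zero, map_ofNat, map_div₀, map_neg, Complex.conj_conj, Complex.conj_I]
            simp only [hB]
            push_cast
            linear_combination ((18:ℂ)*α^3 + (-42:ℂ)*α^6 + (37:ℂ)*α^9 + (-11:ℂ)*α^12 + (-23:ℂ)*α^15 + (23:ℂ)*α^18 + (-152:ℂ)*α^21 + (1099:ℂ)*α^24 + (-3284:ℂ)*α^27 + (4561:ℂ)*α^30 + (750:ℂ)*α^33 + (-16146:ℂ)*α^36 + (32167:ℂ)*α^39 + (-25454:ℂ)*α^42 + (-18178:ℂ)*α^45 + (70720:ℂ)*α^48 + (-67159:ℂ)*α^51 + (-20170:ℂ)*α^54 + (96358:ℂ)*α^57 + (21929:ℂ)*α^60 + (-400861:ℂ)*α^63 + (776593:ℂ)*α^66 + (-620797:ℂ)*α^69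 + (-428096:ℂ)*α^72 + (2085420:ℂ)*α^75 + (-3390811:ℂ)*α^78 + (3297272:ℂ)*α^81 + (-1461193:ℂ)*α^84 + (-1433196:ℂ)*α^87 + (4103519:ℂ)*α^90 + (-5493602:ℂ)*α^93 + (5340692:ℂ)*α^96 + (-4131242:ℂ)*α^99 + (2624230:ℂ)*α^102 + (-1383306:ℂ)*α^105 + (604907:ℂ)*α^108 + (-217694:ℂ)*α^111 + (63497:ℂ)*α^114 + (-14651:ℂ)*α^117 + (2575:ℂ)*α^120 + (-324:ℂ)*α^123 + (26:ℂ)*α^126 + (-1:ℂ)*α^129) * h1)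
        rw [h0]
        norm_num
    · refine ⟨?_, ?_, ?_⟩
      · rw [pdx_eq, Complex.re_add_im, re_sub_im]
        have h0 : (j6u (r ^ 2 * α : ℂ) ((starRingEnd ℂ) (r ^ 2 * α : ℂ)) + j6v (r ^ 2 * α : ℂ) ((starRingEnd ℂ) (r ^ 2 * α : ℂ))).re = 0 :=
          re_eq' (by
            simp only [j6u, j6v, j6, hr, hb, map_add, map_sub, map_mul, map_pow, map_one,
              map_zero, map_ofNat, map_div₀, map_neg, Complex.conj_conj, Complex.conj_I]
            simp only [hB]
            push_cast
            linear_combination ((12:ℂ)*α + (-6:ℂ)*α^2 + (-42:ℂ)*α^4 + (78:ℂ)*α^5 + (54:ℂ)*α^7 + (-192:ℂ)*α^8 + (120:ℂ)*α^10 + (276:ℂ)*α^11 + (-924:ℂ)*α^13 + (-54:ℂ)*α^14 + (2478:ℂ)*α^16 + (-1470:ℂ)*α^17 + (-3030:ℂ)*α^19 + (5472:ℂ)*α^20 + (-3162:ℂ)*α^22 + (-11772:ℂ)*α^23 + (24618:ℂ)*α^25 + (16242:ℂ)*α^26 + (-54144:ℂ)*α^28 + (-6168:ℂ)*α^29 +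 (29550:ℂ)*α^31 + (-40938:ℂ)*α^32 + (171666:ℂ)*α^34 + (133614:ℂ)*α^35 + (-578208:ℂ)*α^37 + (-199830:ℂ)*α^38 + (762222:ℂ)*α^40 + (37764:ℂ)*α^41 + (364176:ℂ)*α^43 + (537750:ℂ)*α^44 + (-3689862:ℂ)*α^46 + (-1245606:ℂ)*α^47 + (7432686:ℂ)*α^49 + (953916:ℂ)*α^50 + (-4862562:ℂ)*α^52 + (1722366:ℂ)*α^53 + (-12603594:ℂ)*α^55 + (-6335784:ℂ)*α^56 + (42489462:ℂ)*α^58 + (8505618:ℂ)*α^59 + (-55033854:ℂ)*α^61 + (-1279584:ℂ)*α^62 + (-2260638:ℂ)*α^64 + (-17936712:ℂ)*α^65 + (153248280:ℂ)*α^67 + (38904444:ℂ)*α^68 + (-309943266:ℂ)*α^70 + (-38593002:ℂ)*α^71 + (246409062:ℂ)*α^73 + (-3055212:ℂ)*α^74 + (254518308:ℂ)*α^76 + (78863646:ℂ)*α^77 + (-1085862396:ℂ)*α^79 + (-143593746:ℂ)*α^80 + (1583710044:ℂ)*α^82 + (135376434:ℂ)*α^83 + (-771289734:ℂ)*α^85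 + (-22547514:ℂ)*α^86 + (-1782114480:ℂ)*α^88 + (-159129318:ℂ)*α^89 + (4997303166:ℂ)*α^91 + (314872164:ℂ)*α^92 + (-6233642538:ℂ)*α^94 + (-347060688:ℂ)*α^95 + (2820766302:ℂ)*α^97 + (220044558:ℂ)*α^98 + (5457519060:ℂ)*α^100 + (15591096:ℂ)*α^101 + (-14853783294:ℂ)*α^103 + (-256488618:ℂ)*α^104 + (18943893516:ℂ)*α^106 + (409798248:ℂ)*α^107 + (-12602748408:ℂ)*α^109 + (-439781940:ℂ)*α^110 + (-3856529640:ℂ)*α^112 + (371274762:ℂ)*α^113 + (23631377424:ℂ)*α^115 + (-259120878:ℂ)*α^116 + (-36761522586:ℂ)*α^118 + (152454150:ℂ)*α^119 + (35869625280:ℂ)*α^121 + (-76120302:ℂ)*α^122 + (-20441361330:ℂ)*α^124 + (32231634:ℂ)*α^125 + (-3150396294:ℂ)*α^127 + (-11502864:ℂ)*α^128 + (25566193866:ℂ)*α^130 + (3420948:ℂ)*α^131 + (-39470262750:ℂ)*α^133 + (-833226:ℂ)*α^134 + (42460673784:ℂ)*α^136 + (162000:ℂ)*α^137 + (-36792435486:ℂ)*α^139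 + (-24186:ℂ)*α^140 + (26948842560:ℂ)*α^142 + (2604:ℂ)*α^143 + (-17036654268:ℂ)*α^145 + (-180:ℂ)*α^146 + (9383602212:ℂ)*α^148 + (6:ℂ)*α^149 + (-4517717976:ℂ)*α^151 + (1899876060:ℂ)*α^154 + (-695221692:ℂ)*α^157 + (219879402:ℂ)*α^160 + (-59512986:ℂ)*α^163 + (13596594:ℂ)*α^166 + (-2572686:ℂ)*α^169 + (392496:ℂ)*α^172 + (-46404:ℂ)*α^175 + (3990:ℂ)*α^178 + (-222:ℂ)*α^181 + (6:ℂ)*α^184) * h1)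
        rw [h0]
        norm_num
      · rw [pdy_eq, Complex.re_add_im, re_sub_im]
        have h0 : (j6u (r ^ 2 * α : ℂ) ((starRingEnd ℂ) (r ^ 2 * α : ℂ)) * Complex.I
            + j6v (r ^ 2 * α : ℂ) ((starRingEnd ℂ) (r ^ 2 * α : ℂ)) * (-Complex.I)).re = 0 :=
          re_eq' (by
            simp only [j6u, j6v, j6, hr, hb, map_add, map_sub, map_mul, map_pow, map_one,
              map_zero, map_ofNat, map_div₀, map_neg, Complex.conj_conj, Complex.conj_I]
            simp only [hB]
            push_cast
            linear_combination ((-12:ℂ)*α*Complex.I + (-6:ℂ)*α^2*Complex.I + (42:ℂ)*α^4*Complex.I + (78:ℂ)*α^5*Complex.I + (-54:ℂ)*α^7*Complex.I + (-192:ℂ)*α^8*Complex.I + (-120:ℂ)*α^10*Complex.I + (276:ℂ)*α^11*Complex.I + (924:ℂ)*α^13*Complex.I + (-54:ℂ)*α^14*Complex.I + (-2478:ℂ)*α^16*Complex.I + (-1470:ℂ)*α^17*Complex.I + (3030:ℂ)*α^19*Complex.I + (5472:ℂ)*α^20*Complex.I + (3162:ℂ)*α^22*Complex.I + (-11772:ℂ)*α^23*Complex.I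 + (-24618:ℂ)*α^25*Complex.I + (16242:ℂ)*α^26*Complex.I + (54144:ℂ)*α^28*Complex.I + (-6168:ℂ)*α^29*Complex.I + (-29550:ℂ)*α^31*Complex.I + (-40938:ℂ)*α^32*Complex.I + (-171666:ℂ)*α^34*Complex.I + (133614:ℂ)*α^35*Complex.I + (578208:ℂ)*α^37*Complex.I + (-199830:ℂ)*α^38*Complex.I + (-762222:ℂ)*α^40*Complex.I + (37764:ℂ)*α^41*Complex.I + (-364176:ℂ)*α^43*Complex.I + (537750:ℂ)*α^44*Complex.I + (3689862:ℂ)*α^46*Complex.I + (-1245606:ℂ)*α^47*Complex.I + (-7432686:ℂ)*α^49*Complex.I + (953916:ℂ)*α^50*Complex.I + (4862562:ℂ)*α^52*Complex.I + (1722366:ℂ)*α^53*Complex.I + (12603594:ℂ)*α^55*Complex.I + (-6335784:ℂ)*α^56*Complex.I + (-42489462:ℂ)*α^58*Complex.I + (8505618:ℂ)*α^59*Complex.I + (55033854:ℂ)*α^61*Complex.I + (-1279584:ℂ)*α^62*Complex.I + (2260638:ℂ)*α^64*Complex.I + (-17936712:ℂ)*α^65*Complex.I + (-153248280:ℂ)*α^67*Complex.I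 + (38904444:ℂ)*α^68*Complex.I + (309943266:ℂ)*α^70*Complex.I + (-38593002:ℂ)*α^71*Complex.I + (-246409062:ℂ)*α^73*Complex.I + (-3055212:ℂ)*α^74*Complex.I + (-254518308:ℂ)*α^76*Complex.I + (78863646:ℂ)*α^77*Complex.I + (1085862396:ℂ)*α^79*Complex.I + (-143593746:ℂ)*α^80*Complex.I + (-1583710044:ℂ)*α^82*Complex.I + (135376434:ℂ)*α^83*Complex.I + (771289734:ℂ)*α^85*Complex.I + (-22547514:ℂ)*α^86*Complex.I + (1782114480:ℂ)*α^88*Complex.I + (-159129318:ℂ)*α^89*Complex.I + (-4997303166:ℂ)*α^91*Complex.I + (314872164:ℂ)*α^92*Complex.I + (6233642538:ℂ)*α^94*Complex.I + (-347060688:ℂ)*α^95*Complex.I + (-2820766302:ℂ)*α^97*Complex.I + (220044558:ℂ)*α^98*Complex.I + (-5457519060:ℂ)*α^100*Complex.I + (15591096:ℂ)*α^101*Complex.I + (14853783294:ℂ)*α^103*Complex.I + (-256488618:ℂ)*α^104*Complex.I + (-18943893516:ℂ)*α^106*Complex.I + (409798248:ℂ)*α^107*Complex.I + (12602748408:ℂ)*α^109*Complex.I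 + (-439781940:ℂ)*α^110*Complex.I + (3856529640:ℂ)*α^112*Complex.I + (371274762:ℂ)*α^113*Complex.I + (-23631377424:ℂ)*α^115*Complex.I + (-259120878:ℂ)*α^116*Complex.I + (36761522586:ℂ)*α^118*Complex.I + (152454150:ℂ)*α^119*Complex.I + (-35869625280:ℂ)*α^121*Complex.I + (-76120302:ℂ)*α^122*Complex.I + (20441361330:ℂ)*α^124*Complex.I + (32231634:ℂ)*α^125*Complex.I + (3150396294:ℂ)*α^127*Complex.I + (-11502864:ℂ)*α^128*Complex.I + (-25566193866:ℂ)*α^130*Complex.I + (3420948:ℂ)*α^131*Complex.I + (39470262750:ℂ)*α^133*Complex.I + (-833226:ℂ)*α^134*Complex.I + (-42460673784:ℂ)*α^136*Complex.I + (162000:ℂ)*α^137*Complex.I + (36792435486:ℂ)*α^139*Complex.I + (-24186:ℂ)*α^140*Complex.I + (-26948842560:ℂ)*α^142*Complex.I + (2604:ℂ)*α^143*Complex.I + (17036654268:ℂ)*α^145*Complex.I + (-180:ℂ)*α^146*Complex.I + (-9383602212:ℂ)*α^148*Complex.I + (6:ℂ)*α^149*Complex.I + (4517717976:ℂ)*α^151*Complex.I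 + (-1899876060:ℂ)*α^154*Complex.I + (695221692:ℂ)*α^157*Complex.I + (-219879402:ℂ)*α^160*Complex.I + (59512986:ℂ)*α^163*Complex.I + (-13596594:ℂ)*α^166*Complex.I + (2572686:ℂ)*α^169*Complex.I + (-392496:ℂ)*α^172*Complex.I + (46404:ℂ)*α^175*Complex.I + (-3990:ℂ)*α^178*Complex.I + (222:ℂ)*α^181*Complex.I + (-6:ℂ)*α^184*Complex.I) * h1)
        rw [h0]
        norm_num
      · have hJ : J6 (((r ^ 2 * α : ℂ)).re, ((r ^ 2 * α : ℂ)).im) = -1 + 2 * ((j6 ((((r ^ 2 * α : ℂ)).re : ℂ) + (((r ^ 2 * α : ℂ)).im : ℂ) * Complex.I)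
            ((((r ^ 2 * α : ℂ)).re : ℂ) - (((r ^ 2 * α : ℂ)).im : ℂ) * Complex.I)).re) := rfl
        rw [hJ, Complex.re_add_im, re_sub_im]
        have h0 : (j6 (r ^ 2 * α : ℂ) ((starRingEnd ℂ) (r ^ 2 * α : ℂ))).re = (0:ℝ) :=
          re_eq' (by
            simp only [j6u, j6v, j6, hr, hb, map_add, map_sub, map_mul, map_pow, map_one,
              map_zero, map_ofNat, map_div₀, map_neg, Complex.conj_conj, Complex.conj_I]
            simp only [hB]
            push_cast
            linear_combination ((6:ℂ)*α^3 + (4:ℂ)*α^6 + (-97:ℂ)*α^9 + (341:ℂ)*α^12 + (-798:ℂ)*α^15 + (997:ℂ)*α^18 + (1229:ℂ)*α^21 + (-9726:ℂ)*α^24 + (25669:ℂ)*α^27 + (-34876:ℂ)*α^30 + (-9454:ℂ)*α^33 + (175000:ℂ)*α^36 + (-437524:ℂ)*α^39 + (442032:ℂ)*α^42 + (602653:ℂ)*α^45 + (-3211719:ℂ)*α^48 + (5609258:ℂ)*α^51 + (-1848418:ℂ)*α^54 + (-15320851:ℂ)*α^57 + (42204810:ℂ)*α^60 + (-47737101:ℂ)*α^63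 + (-22995633:ℂ)*α^66 + (193592721:ℂ)*α^69 + (-356695135:ℂ)*α^72 + (229339400:ℂ)*α^75 + (470461017:ℂ)*α^78 + (-1573807043:ℂ)*α^81 + (2051578764:ℂ)*α^84 + (-327928315:ℂ)*α^87 + (-4205301856:ℂ)*α^90 + (9153303229:ℂ)*α^93 + (-8738135890:ℂ)*α^96 + (-2667218821:ℂ)*α^99 + (23646316054:ℂ)*α^102 + (-40684889527:ℂ)*α^105 + (32299337653:ℂ)*α^108 + (15123571814:ℂ)*α^111 + (-88202068814:ℂ)*α^114 + (141221684649:ℂ)*α^117 + (-117418804000:ℂ)*α^120 + (-9338086039:ℂ)*α^123 + (199952779047:ℂ)*α^126 + (-353941020349:ℂ)*α^129 + (360475246337:ℂ)*α^132 + (-169668260514:ℂ)*α^135 + (-163682740790:ℂ)*α^138 + (497920995496:ℂ)*α^141 + (-677074699991:ℂ)*α^144 + (613553156177:ℂ)*α^147 + (-330334140029:ℂ)*α^150 + (-59159661300:ℂ)*α^153 + (414725900479:ℂ)*α^156 + (-634879890239:ℂ)*α^159 + (689598905127:ℂ)*α^162 + (-612130797643:ℂ)*α^165 + (465962029676:ℂ)*α^168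 + (-310844971285:ℂ)*α^171 + (183705616291:ℂ)*α^174 + (-96683011804:ℂ)*α^177 + (45394947600:ℂ)*α^180 + (-19003197604:ℂ)*α^183 + (7074384278:ℂ)*α^186 + (-2331779397:ℂ)*α^189 + (676240059:ℂ)*α^192 + (-171109224:ℂ)*α^195 + (37358762:ℂ)*α^198 + (-6935969:ℂ)*α^201 + (1073696:ℂ)*α^204 + (-134849:ℂ)*α^207 + (13201:ℂ)*α^210 + (-945:ℂ)*α^213 + (44:ℂ)*α^216 + (-1:ℂ)*α^219) * h1)
        rw [h0]
        norm_num
    · refine ⟨?_, ?_, ?_⟩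
      · rw [pdx_eq, Complex.re_add_im, re_sub_im]
        have h0 : (j6u (2 : ℂ) ((starRingEnd ℂ) (2 : ℂ)) + j6v (2 : ℂ) ((starRingEnd ℂ) (2 : ℂ))).re = 0 :=
          re_eq' (by
            simp only [j6u, j6v, j6, hr, hb, map_add, map_sub, map_mul, map_pow, map_one,
              map_zero, map_ofNat, map_div₀, map_neg, Complex.conj_conj, Complex.conj_I]
            simp only [hB]
            push_cast
            linear_combination ((192:ℂ) + (-384:ℂ)*α^6 + (192:ℂ)*α^9) * h1)
        rw [h0]
        norm_num
      · rw [pdy_eq, Complex.re_add_im, re_sub_im]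
        have h0 : (j6u (2 : ℂ) ((starRingEnd ℂ) (2 : ℂ)) * Complex.I
            + j6v (2 : ℂ) ((starRingEnd ℂ) (2 : ℂ)) * (-Complex.I)).re = 0 :=
          re_eq' (by
            simp only [j6u, j6v, j6, hr, hb, map_add, map_sub, map_mul, map_pow, map_one,
              map_zero, map_ofNat, map_div₀, map_neg, Complex.conj_conj, Complex.conj_I]
            simp only [hB]
            push_cast
            linear_combination (0:ℂ) * h1)
        rw [h0]
        norm_num
      · have hJ : J6 (((2 : ℂ)).re, ((2 : ℂ)).im) = -1 + 2 * ((j6 ((((2 : ℂ)).re : ℂ) + (((2 : ℂ)).im : ℂ) * Complex.I)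
            ((((2 : ℂ)).re : ℂ) - (((2 : ℂ)).im : ℂ) * Complex.I)).re) := rfl
        rw [hJ, Complex.re_add_im, re_sub_im]
        have h0 : (j6 (2 : ℂ) ((starRingEnd ℂ) (2 : ℂ))).re = (0:ℝ) :=
          re_eq' (by
            simp only [j6u, j6v, j6, hr, hb, map_add, map_sub, map_mul, map_pow, map_one,
              map_zero, map_ofNat, map_div₀, map_neg, Complex.conj_conj, Complex.conj_I]
            simp only [hB]
            push_cast
            linear_combination ((64:ℂ) + (-128:ℂ)*α^6 + (64:ℂ)*α^9) * h1)
        rw [h0]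
        norm_num
    · refine ⟨?_, ?_, ?_⟩
      · rw [pdx_eq, Complex.re_add_im, re_sub_im]
        have h0 : (j6u (2 * r : ℂ) ((starRingEnd ℂ) (2 * r : ℂ)) + j6v (2 * r : ℂ) ((starRingEnd ℂ) (2 * r : ℂ))).re = 0 :=
          re_eq' (by
            simp only [j6u, j6v, j6, hr, hb, map_add, map_sub, map_mul, map_pow, map_one,
              map_zero, map_ofNat, map_div₀, map_neg, Complex.conj_conj, Complex.conj_I]
            simp only [hB]
            push_cast
            linear_combination ((1440:ℂ) + (-2280:ℂ)*α^3 + (-1416:ℂ)*α^6 + (9432:ℂ)*α^9 + (-3936:ℂ)*α^12 + (-29664:ℂ)*α^15 + (57288:ℂ)*α^18 + (-4344:ℂ)*α^21 + (-159720:ℂ)*α^24 + (306288:ℂ)*α^27 + (-178080:ℂ)*α^30 + (-337344:ℂ)*α^33 + (929952:ℂ)*α^36 + (-969984:ℂ)*α^39 + (78048:ℂ)*α^42 + (1339104:ℂ)*α^45 + (-2241792:ℂ)*α^48 + (1791168:ℂ)*α^51 + (-102048:ℂ)*α^54 + (-1827456:ℂ)*α^57 + (2936736:ℂ)*α^60 +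 (-2867712:ℂ)*α^63 + (2029248:ℂ)*α^66 + (-1082208:ℂ)*α^69 + (434112:ℂ)*α^72 + (-127488:ℂ)*α^75 + (25920:ℂ)*α^78 + (-3264:ℂ)*α^81 + (192:ℂ)*α^84) * h1)
        rw [h0]
        norm_num
      · rw [pdy_eq, Complex.re_add_im, re_sub_im]
        have h0 : (j6u (2 * r : ℂ) ((starRingEnd ℂ) (2 * r : ℂ)) * Complex.I
            + j6v (2 * r : ℂ) ((starRingEnd ℂ) (2 * r : ℂ)) * (-Complex.I)).re = 0 :=
          re_eq' (by
            simp only [j6u, j6v, j6, hr, hb, map_add, map_sub, map_mul, map_pow, map_one,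
              map_zero, map_ofNat, map_div₀, map_neg, Complex.conj_conj, Complex.conj_I]
            simp only [hB]
            push_cast
            linear_combination ((-1464:ℂ)*α^3*Complex.I + (3816:ℂ)*α^6*Complex.I + (-3432:ℂ)*α^9*Complex.I + (-6048:ℂ)*α^12*Complex.I + (27936:ℂ)*α^15*Complex.I + (-43176:ℂ)*α^18*Complex.I + (5112:ℂ)*α^21*Complex.I + (111720:ℂ)*α^24*Complex.I + (-222096:ℂ)*α^27*Complex.I + (135456:ℂ)*α^30*Complex.I + (243840:ℂ)*α^33*Complex.I + (-687072:ℂ)*α^36*Complex.I + (702528:ℂ)*α^39*Complex.I + (19296:ℂ)*α^42*Complex.I + (-1156128:ℂ)*α^45*Complex.I + (1841664:ℂ)*α^48*Complex.I + (-1349952:ℂ)*α^51*Complex.I + (-228768:ℂ)*α^54*Complex.I + (2004864:ℂ)*α^57*Complex.I + (-3004128:ℂ)*α^60*Complex.I + (2884992:ℂ)*α^63*Complex.I + (-2031936:ℂ)*α^66*Complex.I + (1082400:ℂ)*α^69*Complex.I + (-434112:ℂ)*α^72*Complex.I + (127488:ℂ)*α^75*Complex.I + (-25920:ℂ)*α^78*Complex.I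 + (3264:ℂ)*α^81*Complex.I + (-192:ℂ)*α^84*Complex.I) * h1)
        rw [h0]
        norm_num
      · have hJ : J6 (((2 * r : ℂ)).re, ((2 * r : ℂ)).im) = -1 + 2 * ((j6 ((((2 * r : ℂ)).re : ℂ) + (((2 * r : ℂ)).im : ℂ) * Complex.I)
            ((((2 * r : ℂ)).re : ℂ) - (((2 * r : ℂ)).im : ℂ) * Complex.I)).re) := rfl
        rw [hJ, Complex.re_add_im, re_sub_im]
        have h0 : (j6 (2 * r : ℂ) ((starRingEnd ℂ) (2 * r : ℂ))).re = (0:ℝ) :=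
          re_eq' (by
            simp only [j6u, j6v, j6, hr, hb, map_add, map_sub, map_mul, map_pow, map_one,
              map_zero, map_ofNat, map_div₀, map_neg, Complex.conj_conj, Complex.conj_I]
            simp only [hB]
            push_cast
            linear_combination ((-512:ℂ) + (1120:ℂ)*α^3 + (192:ℂ)*α^6 + (-4352:ℂ)*α^9 + (3696:ℂ)*α^12 + (12704:ℂ)*α^15 + (-31200:ℂ)*α^18 + (3344:ℂ)*α^21 + (102784:ℂ)*α^24 + (-207472:ℂ)*α^27 + (109696:ℂ)*α^30 + (314448:ℂ)*α^33 + (-824000:ℂ)*α^36 + (807088:ℂ)*α^39 + (193024:ℂ)*α^42 + (-1774976:ℂ)*α^45 + (2628096:ℂ)*α^48 + (-1523584:ℂ)*α^51 + (-1383808:ℂ)*α^54 + (4272384:ℂ)*α^57 + (-4915584:ℂ)*α^60 + (2479616:ℂ)*α^63 + (1775936:ℂ)*α^66 + (-5506688:ℂ)*α^69 + (7017728:ℂ)*α^72 + (-6215360:ℂ)*α^75 + (4207744:ℂ)*α^78 + (-2234688:ℂ)*α^81 + (930944:ℂ)*α^84 + (-299200:ℂ)*α^87 + (71744:ℂ)*α^90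 + (-12096:ℂ)*α^93 + (1280:ℂ)*α^96 + (-64:ℂ)*α^99) * h1)
        rw [h0]
        norm_num
    · refine ⟨?_, ?_, ?_⟩
      · rw [pdx_eq, Complex.re_add_im, re_sub_im]
        have h0 : (j6u (2 * r ^ 2 : ℂ) ((starRingEnd ℂ) (2 * r ^ 2 : ℂ)) + j6v (2 * r ^ 2 : ℂ) ((starRingEnd ℂ) (2 * r ^ 2 : ℂ))).re = 0 :=
          re_eq' (by
            simp only [j6u, j6v, j6, hr, hb, map_add, map_sub, map_mul, map_pow, map_one,
              map_zero, map_ofNat, map_div₀, map_neg, Complex.conj_conj, Complex.conj_I]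
            simp only [hB]
            push_cast
            linear_combination ((192:ℂ) + (-816:ℂ)*α^3 + (-2472:ℂ)*α^6 + (21432:ℂ)*α^9 + (-59856:ℂ)*α^12 + (75192:ℂ)*α^15 + (13584:ℂ)*α^18 + (-229128:ℂ)*α^21 + (332424:ℂ)*α^24 + (350880:ℂ)*α^27 + (-2491392:ℂ)*α^30 + (4850208:ℂ)*α^33 + (-1463928:ℂ)*α^36 + (-16898808:ℂ)*α^39 + (48652128:ℂ)*α^42 + (-57418920:ℂ)*α^45 + (-29060784:ℂ)*α^48 + (247364952:ℂ)*α^51 + (-462307800:ℂ)*α^54 + (312177840:ℂ)*α^57 + (547206480:ℂ)*α^60 + (-1893055488:ℂ)*α^63 + (2549329344:ℂ)*α^66 + (-896097120:ℂ)*α^69 + (-3542978784:ℂ)*α^72 + (8526409248:ℂ)*α^75 + (-9438332064:ℂ)*α^78 + (2441128416:ℂ)*α^81 + (11329272480:ℂ)*α^84 + (-24286711008:ℂ)*α^87 + (26186625216:ℂ)*α^90 + (-11476512864:ℂ)*α^93 + (-15272578944:ℂ)*α^96 + (40729337184:ℂ)*α^99 + (-50724447168:ℂ)*α^102 + (39139015680:ℂ)*α^105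 + (-11342383200:ℂ)*α^108 + (-19851485952:ℂ)*α^111 + (42127243872:ℂ)*α^114 + (-49771318752:ℂ)*α^117 + (44625491040:ℂ)*α^120 + (-32781499008:ℂ)*α^123 + (20310196032:ℂ)*α^126 + (-10737293664:ℂ)*α^129 + (4857790272:ℂ)*α^132 + (-1875673536:ℂ)*α^135 + (613540032:ℂ)*α^138 + (-167969664:ℂ)*α^141 + (37804800:ℂ)*α^144 + (-6815232:ℂ)*α^147 + (946368:ℂ)*α^150 + (-95040:ℂ)*α^153 + (6144:ℂ)*α^156 + (-192:ℂ)*α^159) * h1)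
        rw [h0]
        norm_num
      · rw [pdy_eq, Complex.re_add_im, re_sub_im]
        have h0 : (j6u (2 * r ^ 2 : ℂ) ((starRingEnd ℂ) (2 * r ^ 2 : ℂ)) * Complex.I
            + j6v (2 * r ^ 2 : ℂ) ((starRingEnd ℂ) (2 * r ^ 2 : ℂ)) * (-Complex.I)).re = 0 :=
          re_eq' (by
            simp only [j6u, j6v, j6, hr, hb, map_add, map_sub, map_mul, map_pow, map_one,
              map_zero, map_ofNat, map_div₀, map_neg, Complex.conj_conj, Complex.conj_I]
            simp only [hB]
            push_cast
            linear_combination ((1200:ℂ)*α^3*Complex.I + (-6456:ℂ)*α^6*Complex.I + (22536:ℂ)*α^9*Complex.I + (-45072:ℂ)*α^12*Complex.I + (74088:ℂ)*α^15*Complex.I + (-147264:ℂ)*α^18*Complex.I + (328440:ℂ)*α^21*Complex.I + (-446136:ℂ)*α^24*Complex.I + (-413472:ℂ)*α^27*Complex.I + (3639936:ℂ)*α^30*Complex.I + (-8282016:ℂ)*α^33*Complex.I + (6208920:ℂ)*α^36*Complex.I + (16860504:ℂ)*α^39*Complex.I + (-62243712:ℂ)*α^42*Complex.I + (85220136:ℂ)*α^45*Complex.I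 + (8407344:ℂ)*α^48*Complex.I + (-273924888:ℂ)*α^51*Complex.I + (560542776:ℂ)*α^54*Complex.I + (-442584912:ℂ)*α^57*Complex.I + (-499548528:ℂ)*α^60*Complex.I + (2050845312:ℂ)*α^63*Complex.I + (-2921786688:ℂ)*α^66*Complex.I + (1304209248:ℂ)*α^69*Complex.I + (3398672544:ℂ)*α^72*Complex.I + (-8867880288:ℂ)*α^75*Complex.I + (10221670752:ℂ)*α^78*Complex.I + (-3336422688:ℂ)*α^81*Complex.I + (-10756150368:ℂ)*α^84*Complex.I + (24319848864:ℂ)*α^87*Complex.I + (-26815896384:ℂ)*α^90*Complex.I + (12447298848:ℂ)*α^93*Complex.I + (14283143424:ℂ)*α^96*Complex.I + (-39948473760:ℂ)*α^99*Complex.I + (50223907008:ℂ)*α^102*Complex.I + (-38874092544:ℂ)*α^105*Complex.I + (11226337824:ℂ)*α^108*Complex.I + (19893274368:ℂ)*α^111*Complex.I + (-42139434912:ℂ)*α^114*Complex.I + (49774131744:ℂ)*α^117*Complex.I + (-44625985440:ℂ)*α^120*Complex.I + (32781561216:ℂ)*α^123*Complex.I + (-20310201024:ℂ)*α^126*Complex.I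 + (10737293856:ℂ)*α^129*Complex.I + (-4857790272:ℂ)*α^132*Complex.I + (1875673536:ℂ)*α^135*Complex.I + (-613540032:ℂ)*α^138*Complex.I + (167969664:ℂ)*α^141*Complex.I + (-37804800:ℂ)*α^144*Complex.I + (6815232:ℂ)*α^147*Complex.I + (-946368:ℂ)*α^150*Complex.I + (95040:ℂ)*α^153*Complex.I + (-6144:ℂ)*α^156*Complex.I + (192:ℂ)*α^159*Complex.I) * h1)
        rw [h0]
        norm_num
      · have hJ : J6 (((2 * r ^ 2 : ℂ)).re, ((2 * r ^ 2 : ℂ)).im) = -1 + 2 * ((j6 ((((2 * r ^ 2 : ℂ)).re : ℂ) + (((2 * r ^ 2 : ℂ)).im : ℂ) * Complex.I)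
            ((((2 * r ^ 2 : ℂ)).re : ℂ) - (((2 * r ^ 2 : ℂ)).im : ℂ) * Complex.I)).re) := rfl
        rw [hJ, Complex.re_add_im, re_sub_im]
        have h0 : (j6 (2 * r ^ 2 : ℂ) ((starRingEnd ℂ) (2 * r ^ 2 : ℂ))).re = (0:ℝ) :=
          re_eq' (by
            simp only [j6u, j6v, j6, hr, hb, map_add, map_sub, map_mul, map_pow, map_one,
              map_zero, map_ofNat, map_div₀, map_neg, Complex.conj_conj, Complex.conj_I]
            simp only [hB]
            push_cast
            linear_combination ((64:ℂ) + (-384:ℂ)*α^3 + (-704:ℂ)*α^6 + (10496:ℂ)*α^9 + (-40256:ℂ)*α^12 + (76704:ℂ)*α^15 + (-66816:ℂ)*α^18 + (-10304:ℂ)*α^21 + (-36272:ℂ)*α^24 + (645424:ℂ)*α^27 + (-1829104:ℂ)*α^30 + (1528000:ℂ)*α^33 + (5478976:ℂ)*α^36 + (-23301056:ℂ)*α^39 + (40279696:ℂ)*α^42 + (-11744464:ℂ)*α^45 + (-123693584:ℂ)*α^48 + (346788064:ℂ)*α^51 + (-406959248:ℂ)*α^54 + (-175736976:ℂ)*α^57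 + (1652562352:ℂ)*α^60 + (-3163453664:ℂ)*α^63 + (2301562224:ℂ)*α^66 + (3436742512:ℂ)*α^69 + (-12968129328:ℂ)*α^72 + (18420980288:ℂ)*α^75 + (-7633972048:ℂ)*α^78 + (-24878539344:ℂ)*α^81 + (64445365648:ℂ)*α^84 + (-74742569280:ℂ)*α^87 + (19772243648:ℂ)*α^90 + (98341862336:ℂ)*α^93 + (-216015940928:ℂ)*α^96 + (231486663360:ℂ)*α^99 + (-75424443904:ℂ)*α^102 + (-216293904000:ℂ)*α^105 + (491450150464:ℂ)*α^108 + (-560048442368:ℂ)*α^111 + (320498779264:ℂ)*α^114 + (155700055488:ℂ)*α^117 + (-648594644800:ℂ)*α^120 + (913479286784:ℂ)*α^123 + (-820691956608:ℂ)*α^126 + (419598108160:ℂ)*α^129 + (106393067200:ℂ)*α^132 + (-551255282944:ℂ)*α^135 + (786946638208:ℂ)*α^138 + (-799441739328:ℂ)*α^141 + (658885417280:ℂ)*α^144 + (-460851970816:ℂ)*α^147 + (278977712960:ℂ)*α^150 + (-147455661248:ℂ)*α^153 + (68252487680:ℂ)*α^156 + (-27640252992:ℂ)*α^159 + (9754447936:ℂ)*α^162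 + (-2979352064:ℂ)*α^165 + (779759488:ℂ)*α^168 + (-172467840:ℂ)*α^171 + (31628480:ℂ)*α^174 + (-4681600:ℂ)*α^177 + (537536:ℂ)*α^180 + (-44928:ℂ)*α^183 + (2432:ℂ)*α^186 + (-64:ℂ)*α^189) * h1)
        rw [h0]
        norm_num
  · rintro z hz
    simp only [Set.mem_insert_iff, Set.mem_singleton_iff] at hz
    rcases hz with rfl | rfl | rfl
    · refine ⟨?_, ?_, ?_⟩
      · rw [pdx_eq, Complex.re_add_im, re_sub_im]
        have h0 : (j6u ((starRingEnd ℂ) α : ℂ) ((starRingEnd ℂ) ((starRingEnd ℂ) α : ℂ)) + j6v ((starRingEnd ℂ) α : ℂ) ((starRingEnd ℂ) ((starRingEnd ℂ) α : ℂ))).re = 0 :=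
          re_eq' (by
            simp only [j6u, j6v, j6, hr, hb, map_add, map_sub, map_mul, map_pow, map_one,
              map_zero, map_ofNat, map_div₀, map_neg, Complex.conj_conj, Complex.conj_I]
            simp only [hB]
            push_cast
            linear_combination ((12:ℂ)*α + (-6:ℂ)*α^2 + (-18:ℂ)*α^4 + (-18:ℂ)*α^5 + (72:ℂ)*α^7 + (30:ℂ)*α^8 + (-84:ℂ)*α^10 + (-90:ℂ)*α^11 + (66:ℂ)*α^13 + (90:ℂ)*α^14 + (-54:ℂ)*α^16 + (-30:ℂ)*α^17 + (30:ℂ)*α^19 + (-6:ℂ)*α^22) * h1)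
        rw [h0]
        norm_num
      · rw [pdy_eq, Complex.re_add_im, re_sub_im]
        have h0 : (j6u ((starRingEnd ℂ) α : ℂ) ((starRingEnd ℂ) ((starRingEnd ℂ) α : ℂ)) * Complex.I
            + j6v ((starRingEnd ℂ) α : ℂ) ((starRingEnd ℂ) ((starRingEnd ℂ) α : ℂ)) * (-Complex.I)).re = 0 :=
          re_eq' (by
            simp only [j6u, j6v, j6, hr, hb, map_add, map_sub, map_mul, map_pow, map_one,
              map_zero, map_ofNat, map_div₀, map_neg, Complex.conj_conj, Complex.conj_I]
            simp only [hB]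
            push_cast
            linear_combination ((12:ℂ)*α*Complex.I + (6:ℂ)*α^2*Complex.I + (-18:ℂ)*α^4*Complex.I + (18:ℂ)*α^5*Complex.I + (72:ℂ)*α^7*Complex.I + (-30:ℂ)*α^8*Complex.I + (-84:ℂ)*α^10*Complex.I + (90:ℂ)*α^11*Complex.I + (66:ℂ)*α^13*Complex.I + (-90:ℂ)*α^14*Complex.I + (-54:ℂ)*α^16*Complex.I + (30:ℂ)*α^17*Complex.I + (30:ℂ)*α^19*Complex.I + (-6:ℂ)*α^22*Complex.I) * h1)
        rw [h0]
        norm_num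
      · have hJ : J6 ((((starRingEnd ℂ) α : ℂ)).re, (((starRingEnd ℂ) α : ℂ)).im) = -1 + 2 * ((j6 (((((starRingEnd ℂ) α : ℂ)).re : ℂ) + ((((starRingEnd ℂ) α : ℂ)).im : ℂ) * Complex.I)
            (((((starRingEnd ℂ) α : ℂ)).re : ℂ) - ((((starRingEnd ℂ) α : ℂ)).im : ℂ) * Complex.I)).re) := rfl
        rw [hJ, Complex.re_add_im, re_sub_im]
        have h0 : (j6 ((starRingEnd ℂ) α : ℂ) ((starRingEnd ℂ) ((starRingEnd ℂ) α : ℂ))).re = ((9:ℝ)/2) :=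
          re_eq' (by
            simp only [j6u, j6v, j6, hr, hb, map_add, map_sub, map_mul, map_pow, map_one,
              map_zero, map_ofNat, map_div₀, map_neg, Complex.conj_conj, Complex.conj_I]
            simp only [hB]
            push_cast
            linear_combination ((-9:ℂ) + (-3:ℂ)*α^3 + (-16:ℂ)*α^6 + (39:ℂ)*α^9 + (-56:ℂ)*α^12 + (47:ℂ)*α^15 + (-27:ℂ)*α^18 + (14:ℂ)*α^21 + (-6:ℂ)*α^24 + (1:ℂ)*α^27) * h1)
        rw [h0]
        norm_num
    · refine ⟨?_, ?_, ?_⟩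
      · rw [pdx_eq, Complex.re_add_im, re_sub_im]
        have h0 : (j6u ((starRingEnd ℂ) (r * α) : ℂ) ((starRingEnd ℂ) ((starRingEnd ℂ) (r * α) : ℂ)) + j6v ((starRingEnd ℂ) (r * α) : ℂ) ((starRingEnd ℂ) ((starRingEnd ℂ) (r * α) : ℂ))).re = 0 :=
          re_eq' (by
            simp only [j6u, j6v, j6, hr, hb, map_add, map_sub, map_mul, map_pow, map_one,
              map_zero, map_ofNat, map_div₀, map_neg, Complex.conj_conj, Complex.conj_I]
            simp only [hB]
            push_cast
            linear_combination ((-12:ℂ)*α + (-30:ℂ)*α^2 + (6:ℂ)*α^4 + (66:ℂ)*α^5 + (24:ℂ)*α^7 + (-60:ℂ)*α^8 + (-60:ℂ)*α^10 + (-156:ℂ)*α^11 + (-48:ℂ)*α^13 + (678:ℂ)*α^14 + (600:ℂ)*α^16 + (-942:ℂ)*α^17 + (-1128:ℂ)*α^19 + (234:ℂ)*α^20 + (42:ℂ)*α^22 + (1182:ℂ)*α^23 + (3468:ℂ)*α^25 + (-1608:ℂ)*α^26 + (-6576:ℂ)*α^28 + (-282:ℂ)*α^29 + (3690:ℂ)*α^31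 + (2136:ℂ)*α^32 + (5376:ℂ)*α^34 + (1158:ℂ)*α^35 + (-8010:ℂ)*α^37 + (-11106:ℂ)*α^38 + (-11454:ℂ)*α^40 + (21066:ℂ)*α^41 + (44724:ℂ)*α^43 + (-19938:ℂ)*α^44 + (-45474:ℂ)*α^46 + (2280:ℂ)*α^47 + (-37638:ℂ)*α^49 + (24798:ℂ)*α^50 + (194682:ℂ)*α^52 + (-46158:ℂ)*α^53 + (-324750:ℂ)*α^55 + (50880:ℂ)*α^56 + (296340:ℂ)*α^58 + (-40086:ℂ)*α^59 + (-60114:ℂ)*α^61 + (23538:ℂ)*α^62 + (-291618:ℂ)*α^64 + (-10296:ℂ)*α^65 + (583632:ℂ)*α^67 + (3270:ℂ)*α^68 + (-685026:ℂ)*α^70 + (-714:ℂ)*α^71 + (590658:ℂ)*α^73 + (96:ℂ)*α^74 + (-396096:ℂ)*α^76 + (-6:ℂ)*α^77 + (209706:ℂ)*α^79 + (-87288:ℂ)*α^82 + (28050:ℂ)*α^85 + (-6726:ℂ)*α^88 + (1134:ℂ)*α^91 + (-120:ℂ)*α^94 + (6:ℂ)*α^97) * h1)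
        rw [h0]
        norm_num
      · rw [pdy_eq, Complex.re_add_im, re_sub_im]
        have h0 : (j6u ((starRingEnd ℂ) (r * α) : ℂ) ((starRingEnd ℂ) ((starRingEnd ℂ) (r * α) : ℂ)) * Complex.I
            + j6v ((starRingEnd ℂ) (r * α) : ℂ) ((starRingEnd ℂ) ((starRingEnd ℂ) (r * α) : ℂ)) * (-Complex.I)).re = 0 :=
          re_eq' (by
            simp only [j6u, j6v, j6, hr, hb, map_add, map_sub, map_mul, map_pow, map_one,
              map_zero, map_ofNat, map_div₀, map_neg, Complex.conj_conj, Complex.conj_I]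
            simp only [hB]
            push_cast
            linear_combination ((-12:ℂ)*α*Complex.I + (30:ℂ)*α^2*Complex.I + (6:ℂ)*α^4*Complex.I + (-66:ℂ)*α^5*Complex.I + (24:ℂ)*α^7*Complex.I + (60:ℂ)*α^8*Complex.I + (-60:ℂ)*α^10*Complex.I + (156:ℂ)*α^11*Complex.I + (-48:ℂ)*α^13*Complex.I + (-678:ℂ)*α^14*Complex.I + (600:ℂ)*α^16*Complex.I + (942:ℂ)*α^17*Complex.I + (-1128:ℂ)*α^19*Complex.I + (-234:ℂ)*α^20*Complex.I + (42:ℂ)*α^22*Complex.I + (-1182:ℂ)*α^23*Complex.I + (3468:ℂ)*α^25*Complex.I + (1608:ℂ)*α^26*Complex.I + (-6576:ℂ)*α^28*Complex.I + (282:ℂ)*α^29*Complex.I + (3690:ℂ)*α^31*Complex.I + (-2136:ℂ)*α^32*Complex.I + (5376:ℂ)*α^34*Complex.I + (-1158:ℂ)*α^35*Complex.I + (-8010:ℂ)*α^37*Complex.I + (11106:ℂ)*α^38*Complex.I + (-11454:ℂ)*α^40*Complex.I + (-21066:ℂ)*α^41*Complex.I + (44724:ℂ)*α^43*Complex.I +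 (19938:ℂ)*α^44*Complex.I + (-45474:ℂ)*α^46*Complex.I + (-2280:ℂ)*α^47*Complex.I + (-37638:ℂ)*α^49*Complex.I + (-24798:ℂ)*α^50*Complex.I + (194682:ℂ)*α^52*Complex.I + (46158:ℂ)*α^53*Complex.I + (-324750:ℂ)*α^55*Complex.I + (-50880:ℂ)*α^56*Complex.I + (296340:ℂ)*α^58*Complex.I + (40086:ℂ)*α^59*Complex.I + (-60114:ℂ)*α^61*Complex.I + (-23538:ℂ)*α^62*Complex.I + (-291618:ℂ)*α^64*Complex.I + (10296:ℂ)*α^65*Complex.I + (583632:ℂ)*α^67*Complex.I + (-3270:ℂ)*α^68*Complex.I + (-685026:ℂ)*α^70*Complex.I + (714:ℂ)*α^71*Complex.I + (590658:ℂ)*α^73*Complex.I + (-96:ℂ)*α^74*Complex.I + (-396096:ℂ)*α^76*Complex.I + (6:ℂ)*α^77*Complex.I + (209706:ℂ)*α^79*Complex.I + (-87288:ℂ)*α^82*Complex.I + (28050:ℂ)*α^85*Complex.I + (-6726:ℂ)*α^88*Complex.I + (1134:ℂ)*α^91*Complex.I + (-120:ℂ)*α^94*Complex.I + (6:ℂ)*α^97*Complex.I)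 * h1)
        rw [h0]
        norm_num
      · have hJ : J6 ((((starRingEnd ℂ) (r * α) : ℂ)).re, (((starRingEnd ℂ) (r * α) : ℂ)).im) = -1 + 2 * ((j6 (((((starRingEnd ℂ) (r * α) : ℂ)).re : ℂ) + ((((starRingEnd ℂ) (r * α) : ℂ)).im : ℂ) * Complex.I)
            (((((starRingEnd ℂ) (r * α) : ℂ)).re : ℂ) - ((((starRingEnd ℂ) (r * α) : ℂ)).im : ℂ) * Complex.I)).re) := rfl
        rw [hJ, Complex.re_add_im, re_sub_im]
        have h0 : (j6 ((starRingEnd ℂ) (r * α) : ℂ) ((starRingEnd ℂ) ((starRingEnd ℂ) (r * α) : ℂ))).re = ((9:ℝ)/2) :=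
          re_eq' (by
            simp only [j6u, j6v, j6, hr, hb, map_add, map_sub, map_mul, map_pow, map_one,
              map_zero, map_ofNat, map_div₀, map_neg, Complex.conj_conj, Complex.conj_I]
            simp only [hB]
            push_cast
            linear_combination ((-9:ℂ) + (9:ℂ)*α^3 + (-34:ℂ)*α^6 + (7:ℂ)*α^9 + (104:ℂ)*α^12 + (-215:ℂ)*α^15 + (143:ℂ)*α^18 + (207:ℂ)*α^21 + (-236:ℂ)*α^24 + (-1223:ℂ)*α^27 + (3958:ℂ)*α^30 + (-4180:ℂ)*α^33 + (-3217:ℂ)*α^36 + (16534:ℂ)*α^39 + (-22815:ℂ)*α^42 + (9644:ℂ)*α^45 + (12096:ℂ)*α^48 + (-4452:ℂ)*α^51 + (-57728:ℂ)*α^54 + (129298:ℂ)*α^57 + (-92853:ℂ)*α^60 + (-145580:ℂ)*α^63 + (527947:ℂ)*α^66 + (-818787:ℂ)*α^69 + (749531:ℂ)*α^72 + (-232999:ℂ)*α^75 + (-540918:ℂ)*α^78 + (1222183:ℂ)*α^81 + (-1533006:ℂ)*α^84 + (1424406:ℂ)*α^87 + (-1052595:ℂ)*α^90 + (633770:ℂ)*α^93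 + (-312720:ℂ)*α^96 + (125845:ℂ)*α^99 + (-40749:ℂ)*α^102 + (10374:ℂ)*α^105 + (-2001:ℂ)*α^108 + (275:ℂ)*α^111 + (-24:ℂ)*α^114 + (1:ℂ)*α^117) * h1)
        rw [h0]
        norm_num
    · refine ⟨?_, ?_, ?_⟩
      · rw [pdx_eq, Complex.re_add_im, re_sub_im]
        have h0 : (j6u ((starRingEnd ℂ) (r ^ 2 * α) : ℂ) ((starRingEnd ℂ) ((starRingEnd ℂ) (r ^ 2 * α) : ℂ)) + j6v ((starRingEnd ℂ) (r ^ 2 * α) : ℂ) ((starRingEnd ℂ) ((starRingEnd ℂ) (r ^ 2 * α) : ℂ))).re = 0 :=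
          re_eq' (by
            simp only [j6u, j6v, j6, hr, hb, map_add, map_sub, map_mul, map_pow, map_one,
              map_zero, map_ofNat, map_div₀, map_neg, Complex.conj_conj, Complex.conj_I]
            simp only [hB]
            push_cast
            linear_combination ((12:ℂ)*α + (-6:ℂ)*α^2 + (-42:ℂ)*α^4 + (54:ℂ)*α^5 + (84:ℂ)*α^7 + (-78:ℂ)*α^8 + (-30:ℂ)*α^11 + (-642:ℂ)*α^13 + (504:ℂ)*α^14 + (2226:ℂ)*α^16 + (-1704:ℂ)*α^17 + (-3834:ℂ)*α^19 + (3270:ℂ)*α^20 + (306:ℂ)*α^22 + (-3714:ℂ)*α^23 + (19854:ℂ)*α^25 + (570:ℂ)*α^26 + (-62082:ℂ)*α^28 + (10608:ℂ)*α^29 + (84420:ℂ)*α^31 + (-39918:ℂ)*α^32 + (41484:ℂ)*α^34 + (98382:ℂ)*α^35 + (-450138:ℂ)*α^37 + (-155598:ℂ)*α^38 + (963264:ℂ)*α^40 + (72420:ℂ)*α^41 + (-698298:ℂ)*α^43 + (361422:ℂ)*α^44 + (-1673628:ℂ)*α^46 + (-1126668:ℂ)*α^47 + (6142680:ℂ)*α^49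 + (1540584:ℂ)*α^50 + (-8563902:ℂ)*α^52 + (-317664:ℂ)*α^53 + (414198:ℂ)*α^55 + (-3230634:ℂ)*α^56 + (23726022:ℂ)*α^58 + (7330560:ℂ)*α^59 + (-51275196:ℂ)*α^61 + (-7291218:ℂ)*α^62 + (43398642:ℂ)*α^64 + (-1466934:ℂ)*α^65 + (42872454:ℂ)*α^67 + (17819574:ℂ)*α^68 + (-195206718:ℂ)*α^70 + (-31706766:ℂ)*α^71 + (291477960:ℂ)*α^73 + (28497636:ℂ)*α^74 + (-134243808:ℂ)*α^76 + (-341400:ℂ)*α^77 + (-378063864:ℂ)*α^79 + (-43916562:ℂ)*α^80 + (1032402144:ℂ)*α^82 + (80196324:ℂ)*α^83 + (-1260691620:ℂ)*α^85 + (-83616654:ℂ)*α^86 + (461559606:ℂ)*α^88 + (45842370:ℂ)*α^89 + (1421571810:ℂ)*α^91 + (18387570:ℂ)*α^92 + (-3512040942:ℂ)*α^94 + (-80734986:ℂ)*α^95 + (4276824828:ℂ)*α^97 + (116919420:ℂ)*α^98 + (-2494633176:ℂ)*α^100 + (-119207394:ℂ)*α^101 + (-1695198876:ℂ)*α^103 +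 (96365004:ℂ)*α^104 + (6514874514:ℂ)*α^106 + (-64271316:ℂ)*α^107 + (-9415425846:ℂ)*α^109 + (35900244:ℂ)*α^110 + (8585965554:ℂ)*α^112 + (-16851228:ℂ)*α^113 + (-4063105776:ℂ)*α^115 + (6620958:ℂ)*α^116 + (-2320834500:ℂ)*α^118 + (-2155884:ℂ)*α^119 + (8048993376:ℂ)*α^121 + (572238:ℂ)*α^122 + (-11269181274:ℂ)*α^124 + (-120750:ℂ)*α^125 + (11527179030:ℂ)*α^127 + (19494:ℂ)*α^128 + (-9598968966:ℂ)*α^130 + (-2262:ℂ)*α^131 + (6766080864:ℂ)*α^133 + (168:ℂ)*α^134 + (-4106106720:ℂ)*α^136 + (-6:ℂ)*α^137 + (2160596856:ℂ)*α^139 + (-987157194:ℂ)*α^142 + (390631746:ℂ)*α^145 + (-133092306:ℂ)*α^148 + (38680428:ℂ)*α^151 + (-9461946:ℂ)*α^154 + (1912026:ℂ)*α^157 + (-310800:ℂ)*α^160 + (39066:ℂ)*α^163 + (-3564:ℂ)*α^166 + (210:ℂ)*α^169 + (-6:ℂ)*α^172) * h1)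
        rw [h0]
        norm_num
      · rw [pdy_eq, Complex.re_add_im, re_sub_im]
        have h0 : (j6u ((starRingEnd ℂ) (r ^ 2 * α) : ℂ) ((starRingEnd ℂ) ((starRingEnd ℂ) (r ^ 2 * α) : ℂ)) * Complex.I
            + j6v ((starRingEnd ℂ) (r ^ 2 * α) : ℂ) ((starRingEnd ℂ) ((starRingEnd ℂ) (r ^ 2 * α) : ℂ)) * (-Complex.I)).re = 0 :=
          re_eq' (by
            simp only [j6u, j6v, j6, hr, hb, map_add, map_sub, map_mul, map_pow, map_one,
              map_zero, map_ofNat, map_div₀, map_neg, Complex.conj_conj, Complex.conj_I]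
            simp only [hB]
            push_cast
            linear_combination ((12:ℂ)*α*Complex.I + (6:ℂ)*α^2*Complex.I + (-42:ℂ)*α^4*Complex.I + (-54:ℂ)*α^5*Complex.I + (84:ℂ)*α^7*Complex.I + (78:ℂ)*α^8*Complex.I + (30:ℂ)*α^11*Complex.I + (-642:ℂ)*α^13*Complex.I + (-504:ℂ)*α^14*Complex.I + (2226:ℂ)*α^16*Complex.I + (1704:ℂ)*α^17*Complex.I + (-3834:ℂ)*α^19*Complex.I + (-3270:ℂ)*α^20*Complex.I + (306:ℂ)*α^22*Complex.I + (3714:ℂ)*α^23*Complex.I + (19854:ℂ)*α^25*Complex.I + (-570:ℂ)*α^26*Complex.I + (-62082:ℂ)*α^28*Complex.I + (-10608:ℂ)*α^29*Complex.I + (84420:ℂ)*α^31*Complex.I + (39918:ℂ)*α^32*Complex.I + (41484:ℂ)*α^34*Complex.I + (-98382:ℂ)*α^35*Complex.I + (-450138:ℂ)*α^37*Complex.I + (155598:ℂ)*α^38*Complex.I + (963264:ℂ)*α^40*Complex.I + (-72420:ℂ)*α^41*Complex.I + (-698298:ℂ)*α^43*Complex.I + (-361422:ℂ)*α^44*Complex.I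 + (-1673628:ℂ)*α^46*Complex.I + (1126668:ℂ)*α^47*Complex.I + (6142680:ℂ)*α^49*Complex.I + (-1540584:ℂ)*α^50*Complex.I + (-8563902:ℂ)*α^52*Complex.I + (317664:ℂ)*α^53*Complex.I + (414198:ℂ)*α^55*Complex.I + (3230634:ℂ)*α^56*Complex.I + (23726022:ℂ)*α^58*Complex.I + (-7330560:ℂ)*α^59*Complex.I + (-51275196:ℂ)*α^61*Complex.I + (7291218:ℂ)*α^62*Complex.I + (43398642:ℂ)*α^64*Complex.I + (1466934:ℂ)*α^65*Complex.I + (42872454:ℂ)*α^67*Complex.I + (-17819574:ℂ)*α^68*Complex.I + (-195206718:ℂ)*α^70*Complex.I + (31706766:ℂ)*α^71*Complex.I + (291477960:ℂ)*α^73*Complex.I + (-28497636:ℂ)*α^74*Complex.I + (-134243808:ℂ)*α^76*Complex.I + (341400:ℂ)*α^77*Complex.I + (-378063864:ℂ)*α^79*Complex.I + (43916562:ℂ)*α^80*Complex.I + (1032402144:ℂ)*α^82*Complex.I + (-80196324:ℂ)*α^83*Complex.I + (-1260691620:ℂ)*α^85*Complex.I + (83616654:ℂ)*α^86*Complex.I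 + (461559606:ℂ)*α^88*Complex.I + (-45842370:ℂ)*α^89*Complex.I + (1421571810:ℂ)*α^91*Complex.I + (-18387570:ℂ)*α^92*Complex.I + (-3512040942:ℂ)*α^94*Complex.I + (80734986:ℂ)*α^95*Complex.I + (4276824828:ℂ)*α^97*Complex.I + (-116919420:ℂ)*α^98*Complex.I + (-2494633176:ℂ)*α^100*Complex.I + (119207394:ℂ)*α^101*Complex.I + (-1695198876:ℂ)*α^103*Complex.I + (-96365004:ℂ)*α^104*Complex.I + (6514874514:ℂ)*α^106*Complex.I + (64271316:ℂ)*α^107*Complex.I + (-9415425846:ℂ)*α^109*Complex.I + (-35900244:ℂ)*α^110*Complex.I + (8585965554:ℂ)*α^112*Complex.I + (16851228:ℂ)*α^113*Complex.I + (-4063105776:ℂ)*α^115*Complex.I + (-6620958:ℂ)*α^116*Complex.I + (-2320834500:ℂ)*α^118*Complex.I + (2155884:ℂ)*α^119*Complex.I + (8048993376:ℂ)*α^121*Complex.I + (-572238:ℂ)*α^122*Complex.I + (-11269181274:ℂ)*α^124*Complex.I + (120750:ℂ)*α^125*Complex.I + (11527179030:ℂ)*α^127*Complex.I + (-19494:ℂ)*α^128*Complex.I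 + (-9598968966:ℂ)*α^130*Complex.I + (2262:ℂ)*α^131*Complex.I + (6766080864:ℂ)*α^133*Complex.I + (-168:ℂ)*α^134*Complex.I + (-4106106720:ℂ)*α^136*Complex.I + (6:ℂ)*α^137*Complex.I + (2160596856:ℂ)*α^139*Complex.I + (-987157194:ℂ)*α^142*Complex.I + (390631746:ℂ)*α^145*Complex.I + (-133092306:ℂ)*α^148*Complex.I + (38680428:ℂ)*α^151*Complex.I + (-9461946:ℂ)*α^154*Complex.I + (1912026:ℂ)*α^157*Complex.I + (-310800:ℂ)*α^160*Complex.I + (39066:ℂ)*α^163*Complex.I + (-3564:ℂ)*α^166*Complex.I + (210:ℂ)*α^169*Complex.I + (-6:ℂ)*α^172*Complex.I) * h1)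
        rw [h0]
        norm_num
      · have hJ : J6 ((((starRingEnd ℂ) (r ^ 2 * α) : ℂ)).re, (((starRingEnd ℂ) (r ^ 2 * α) : ℂ)).im) = -1 + 2 * ((j6 (((((starRingEnd ℂ) (r ^ 2 * α) : ℂ)).re : ℂ) + ((((starRingEnd ℂ) (r ^ 2 * α) : ℂ)).im : ℂ) * Complex.I)
            (((((starRingEnd ℂ) (r ^ 2 * α) : ℂ)).re : ℂ) - ((((starRingEnd ℂ) (r ^ 2 * α) : ℂ)).im : ℂ) * Complex.I)).re) := rfl
        rw [hJ, Complex.re_add_im, re_sub_im]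
        have h0 : (j6 ((starRingEnd ℂ) (r ^ 2 * α) : ℂ) ((starRingEnd ℂ) ((starRingEnd ℂ) (r ^ 2 * α) : ℂ))).re = ((9:ℝ)/2) :=
          re_eq' (by
            simp only [j6u, j6v, j6, hr, hb, map_add, map_sub, map_mul, map_pow, map_one,
              map_zero, map_ofNat, map_div₀, map_neg, Complex.conj_conj, Complex.conj_I]
            simp only [hB]
            push_cast
            linear_combination ((-9:ℂ) + (-3:ℂ)*α^3 + (-4:ℂ)*α^6 + (-27:ℂ)*α^9 + (142:ℂ)*α^12 + (-357:ℂ)*α^15 + (531:ℂ)*α^18 + (534:ℂ)*α^21 + (-5762:ℂ)*α^24 + (17928:ℂ)*α^27 + (-30804:ℂ)*α^30 + (9874:ℂ)*α^33 + (119283:ℂ)*α^36 + (-406237:ℂ)*α^39 + (652107:ℂ)*α^42 + (-138486:ℂ)*α^45 + (-2121102:ℂ)*α^48 + (5821145:ℂ)*α^51 + (-6842876:ℂ)*α^54 + (-2972706:ℂ)*α^57 + (28381563:ℂ)*α^60 + (-54822016:ℂ)*α^63 + (37951328:ℂ)*α^66 + (72604107:ℂ)*α^69 + (-258652836:ℂ)*α^72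 + (351947400:ℂ)*α^75 + (-67676808:ℂ)*α^78 + (-734919767:ℂ)*α^81 + (1651671361:ℂ)*α^84 + (-1595598351:ℂ)*α^87 + (-576759415:ℂ)*α^90 + (4671350389:ℂ)*α^93 + (-7991657451:ℂ)*α^96 + (6034143577:ℂ)*α^99 + (4173129111:ℂ)*α^102 + (-19731275571:ℂ)*α^105 + (30408602314:ℂ)*α^108 + (-23332340515:ℂ)*α^111 + (-7237967847:ℂ)*α^114 + (51498650182:ℂ)*α^117 + (-84924352438:ℂ)*α^120 + (80887647825:ℂ)*α^123 + (-28511000924:ℂ)*α^126 + (-56499175864:ℂ)*α^129 + (136970614791:ℂ)*α^132 + (-173522384030:ℂ)*α^135 + (146033011510:ℂ)*α^138 + (-63817018785:ℂ)*α^141 + (-40984511650:ℂ)*α^144 + (131174035972:ℂ)*α^147 + (-181799332941:ℂ)*α^150 + (187817981786:ℂ)*α^153 + (-160572395243:ℂ)*α^156 + (118116809457:ℂ)*α^159 + (-76119580030:ℂ)*α^162 + (43357570715:ℂ)*α^165 + (-21912348597:ℂ)*α^168 + (9832133458:ℂ)*α^171 + (-3910022713:ℂ)*α^174 + (1372843329:ℂ)*α^177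 + (-423080189:ℂ)*α^180 + (113515235:ℂ)*α^183 + (-26229891:ℂ)*α^186 + (5144827:ℂ)*α^189 + (-840036:ℂ)*α^192 + (111111:ℂ)*α^195 + (-11439:ℂ)*α^198 + (860:ℂ)*α^201 + (-42:ℂ)*α^204 + (1:ℂ)*α^207) * h1)
        rw [h0]
        norm_num
end
end

section
/- Let f ∈ ℂ[x,y,z] be the cubic f = −1 + 3x² − x³ − 3√3·x²y + 3y² + 3xy² + √3·y³ + (3z² − z³)/4. Then the complex vector space ℂ[x,y,z]/⟨f, ∂f/∂x, ∂f/∂y, ∂f/∂z⟩ has dimension 4, i.e. the total Tjurina number of f is 4. -/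
noncomputable section

set_option maxHeartbeats 2000000 in
open MvPolynomial in
/-- The total Tjurina number of the Cayley-type cubic
`f = -1 + 3x² - x³ - 3√3 x²y + 3y² + 3xy² + √3 y³ + (3z² - z³)/4` is 4. -/
theorem stmt8 (f : MvPolynomial (Fin 3) ℂ)
    (hf : f = C (-1) + C 3 * X 0 ^ 2 - X 0 ^ 3
      - C (3 * ((Real.sqrt 3 : ℝ) : ℂ)) * X 0 ^ 2 * X 1
      + C 3 * X 1 ^ 2 + C 3 * X 0 * X 1 ^ 2 + C ((Real.sqrt 3 : ℝ) : ℂ) * X 1 ^ 3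
      + C (3 / 4) * X 2 ^ 2 - C (1 / 4) * X 2 ^ 3) :
    Module.finrank ℂ
      (MvPolynomial (Fin 3) ℂ ⧸
        Ideal.span ({f, pderiv 0 f, pderiv 1 f, pderiv 2 f} :
          Set (MvPolynomial (Fin 3) ℂ))) = 4 := by

  set s : ℂ := ((Real.sqrt 3 : ℝ) : ℂ) with hsdef
  have hs2 : s ^ 2 = 3 := by
    rw [hsdef]; norm_cast; rw [Real.sq_sqrt] <;> norm_num
  -- constants
  have hC3 : (C (3:ℂ) : MvPolynomial (Fin 3) ℂ) = 3 := by simp [map_ofNat]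
  have hC3s : (C (3*s) : MvPolynomial (Fin 3) ℂ) = 3 * C s := by rw [C_mul, hC3]
  have hCm1 : (C (-1:ℂ) : MvPolynomial (Fin 3) ℂ) = -1 := by simp
  have h34 : (4 : MvPolynomial (Fin 3) ℂ) * C ((3:ℂ)/4) = 3 := by
    rw [← map_ofNat (C : ℂ →+* MvPolynomial (Fin 3) ℂ) 4, ← C_mul, ← hC3]; norm_num
  have h14 : (4 : MvPolynomial (Fin 3) ℂ) * C ((1:ℂ)/4) = 1 := by
    rw [← map_ofNat (C : ℂ →+* MvPolynomial (Fin 3) ℂ) 4, ← C_mul]; norm_num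
  have hcs : (C s : MvPolynomial (Fin 3) ℂ) ^ 2 = 3 := by rw [← map_pow, hs2, hC3]
  have hCk : (3 : MvPolynomial (Fin 3) ℂ) * C (s/3) = C s := by
    rw [← map_ofNat (C : ℂ →+* MvPolynomial (Fin 3) ℂ) 3, ← C_mul, show (3:ℂ)*(s/3) = s by ring]
  -- integerized generators
  have hfx : pderiv 0 f = 6 * X 0 - 3 * X 0 ^ 2 - 6 * C s * (X 0 * X 1) + 3 * X 1 ^ 2 := by
    rw [hf]
    simp only [map_add, map_sub, pderiv_mul, pderiv_pow, pderiv_C, pderiv_X_self,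
      pderiv_X_of_ne (show (1:Fin 3) ≠ 0 by decide), pderiv_X_of_ne (show (2:Fin 3) ≠ 0 by decide)]
    rw [hC3, hC3s]; ring
  have hfy : pderiv 1 f = -(3 * C s) * X 0 ^ 2 + 6 * (X 0 * X 1) + 3 * C s * X 1 ^ 2 + 6 * X 1 := by
    rw [hf]
    simp only [map_add, map_sub, pderiv_mul, pderiv_pow, pderiv_C, pderiv_X_self,
      pderiv_X_of_ne (show (0:Fin 3) ≠ 1 by decide), pderiv_X_of_ne (show (2:Fin 3) ≠ 1 by decide)]
    rw [hC3, hC3s]; ring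
  have hfz4 : (4 : MvPolynomial (Fin 3) ℂ) * pderiv 2 f = 6 * X 2 - 3 * X 2 ^ 2 := by
    rw [hf]
    simp only [map_add, map_sub, pderiv_mul, pderiv_pow, pderiv_C, pderiv_X_self,
      pderiv_X_of_ne (show (0:Fin 3) ≠ 2 by decide), pderiv_X_of_ne (show (1:Fin 3) ≠ 2 by decide)]
    linear_combination (2 * X 2 : MvPolynomial (Fin 3) ℂ) * h34 - 3 * X 2 ^ 2 * h14
  have hf4 : (4 : MvPolynomial (Fin 3) ℂ) * f
      = -4 + 12 * X 0 ^ 2 - 12 * C s * (X 0 ^ 2 * X 1) - 4 * X 0 ^ 3 + 12 * X 1 ^ 2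
        + 12 * (X 0 * X 1 ^ 2) + 4 * C s * X 1 ^ 3 + 3 * X 2 ^ 2 - X 2 ^ 3 := by
    rw [hf]
    linear_combination (4 : MvPolynomial (Fin 3) ℂ) * hCm1
      + (4 * X 0 ^ 2 + 4 * X 1 ^ 2 + 4 * X 0 * X 1 ^ 2) * hC3
      - 4 * (X 0 ^ 2 * X 1) * hC3s + X 2 ^ 2 * h34 - X 2 ^ 3 * h14
  set J : Ideal (MvPolynomial (Fin 3) ℂ) := Ideal.span {f, pderiv 0 f, pderiv 1 f, pderiv 2 f} with hJdef
  have hmf : f ∈ J := Ideal.subset_span (by simp)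
  have hmx : pderiv 0 f ∈ J := Ideal.subset_span (by simp)
  have hmy : pderiv 1 f ∈ J := Ideal.subset_span (by simp)
  have hmz : pderiv 2 f ∈ J := Ideal.subset_span (by simp)
  have scale_mem : ∀ (c : ℂ) (p : MvPolynomial (Fin 3) ℂ), c ≠ 0 → C c * p ∈ J → p ∈ J := by
    intro c p hc h
    have hp : p = C c⁻¹ * (C c * p) := by
      rw [← mul_assoc, ← C_mul, inv_mul_cancel₀ hc, C_1, one_mul]
    rw [hp]; exact Ideal.mul_mem_left _ _ h
  -- key identities
  have key1 : (12 : MvPolynomial (Fin 3) ℂ) * (8*X 0^4 - 6*X 0^2 - X 0)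
      = (-8*X 0^2 - 4*C s*(X 0*X 1) - 13*X 0 - C s*X 1 - 2) * pderiv 0 f
      + (-8*C s*X 0^2 + 4*(X 0*X 1) - C s*X 0 + X 1) * pderiv 1 f := by
    rw [hfx, hfy]
    linear_combination (-24*X 0^4 - 3*X 0^3 - 3*X 0*X 1^2 : MvPolynomial (Fin 3) ℂ) * hcs
  have key2 : (18 : MvPolynomial (Fin 3) ℂ) * (X 1 - C (s/3) * (11*X 0 + 4*X 0^2 - 16*X 0^3))
      = (-8*C s*X 0 - 12*X 1 - 11*C s) * pderiv 0 f
      + (-24*X 0 + 4*C s*X 1 + 3) * pderiv 1 f := by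
    rw [hfx, hfy]
    linear_combination (-36*X 0^2*X 1 - 12*X 1^3 - 66*(X 0*X 1) : MvPolynomial (Fin 3) ℂ) * hcs
      + (96*X 0^3 - 24*X 0^2 - 66*X 0 : MvPolynomial (Fin 3) ℂ) * hCk
  have key3 : (12 : MvPolynomial (Fin 3) ℂ) * (X 2 - (2 + 12*X 0 - 16*X 0^3))
      = 6 * ((4:MvPolynomial (Fin 3) ℂ)*f) + (-24*X 0 - 8*C s*X 1 - 24) * pderiv 0 f
      + (-16*C s*X 0) * pderiv 1 f + (-2*X 2 + 2) * ((4:MvPolynomial (Fin 3) ℂ)*pderiv 2 f) := by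
    rw [hf4, hfx, hfy, hfz4]
    linear_combination (-48*X 0^3 : MvPolynomial (Fin 3) ℂ) * hcs
  -- memberships
  have hqmem : (8*X 0^4 - 6*X 0^2 - X 0 : MvPolynomial (Fin 3) ℂ) ∈ J := by
    apply scale_mem 12 _ (by norm_num)
    rw [map_ofNat, key1]
    exact add_mem (Ideal.mul_mem_left _ _ hmx) (Ideal.mul_mem_left _ _ hmy)
  have hymem : (X 1 - C (s/3) * (11*X 0 + 4*X 0^2 - 16*X 0^3) : MvPolynomial (Fin 3) ℂ) ∈ J := by
    apply scale_mem 18 _ (by norm_num)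
    rw [map_ofNat, key2]
    exact add_mem (Ideal.mul_mem_left _ _ hmx) (Ideal.mul_mem_left _ _ hmy)
  have hzmem : (X 2 - (2 + 12*X 0 - 16*X 0^3) : MvPolynomial (Fin 3) ℂ) ∈ J := by
    apply scale_mem 12 _ (by norm_num)
    rw [map_ofNat, key3]
    exact add_mem (add_mem (add_mem
      (Ideal.mul_mem_left _ _ (Ideal.mul_mem_left _ _ hmf))
      (Ideal.mul_mem_left _ _ hmx))
      (Ideal.mul_mem_left _ _ hmy))
      (Ideal.mul_mem_left _ _ (Ideal.mul_mem_left _ _ hmz))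
  -- the univariate model
  set qp : Polynomial ℂ := 8 * Polynomial.X^4 - 6 * Polynomial.X^2 - Polynomial.X with hqpdef
  have hqdeg : qp.natDegree = 4 := by rw [hqpdef]; compute_degree!
  have hqne : qp ≠ 0 := fun h => by simp [h] at hqdeg
  set rt : AdjoinRoot qp := AdjoinRoot.root qp with hrtdef
  set sA : AdjoinRoot qp := algebraMap ℂ (AdjoinRoot qp) s with hsAdef
  set kA : AdjoinRoot qp := algebraMap ℂ (AdjoinRoot qp) (s/3) with hkAdef
  have hq0 : 8*rt^4 - 6*rt^2 - rt = 0 := by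
    have h := AdjoinRoot.mk_self (f := qp)
    rw [← AdjoinRoot.aeval_eq] at h
    rw [hqpdef] at h
    simp only [map_sub, map_mul, map_pow, map_ofNat, Polynomial.aeval_X] at h
    exact h
  have hsA2 : sA^2 = 3 := by
    rw [hsAdef, ← map_pow, hs2, map_ofNat]
  have hkA : (3:AdjoinRoot qp) * kA = sA := by
    rw [hkAdef, hsAdef, ← map_ofNat (algebraMap ℂ (AdjoinRoot qp)) 3, ← map_mul,
      show (3:ℂ)*(s/3) = s by ring]
  set v : Fin 3 → AdjoinRoot qp := ![rt, kA * (11*rt + 4*rt^2 - 16*rt^3), 2 + 12*rt - 16*rt^3] with hvdef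
  have hv0 : v 0 = rt := rfl
  have hv1 : v 1 = kA * (11*rt + 4*rt^2 - 16*rt^3) := rfl
  have hv2 : v 2 = 2 + 12*rt - 16*rt^3 := rfl
  have unit4 : IsUnit (4 : AdjoinRoot qp) := by
    refine IsUnit.of_mul_eq_one (algebraMap ℂ (AdjoinRoot qp) (4⁻¹)) ?_
    rw [← map_ofNat (algebraMap ℂ (AdjoinRoot qp)) 4, ← map_mul]; norm_num
  -- aeval v kills generators
  have hφf : aeval v f = 0 := by
    rw [← unit4.mul_right_eq_zero]
    have h1 : aeval v ((4:MvPolynomial (Fin 3) ℂ)*f) = (4:AdjoinRoot qp) * aeval v f := by rw [map_mul, map_ofNat]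
    rw [← h1, hf4]
    simp only [map_add, map_sub, map_mul, map_pow, map_neg, map_ofNat, aeval_X, aeval_C,
      hv0, hv1, hv2, ← hsAdef, map_one]
    linear_combination
      ((-2048)*rt^5*sA*kA^3 + 1536*rt^4*sA*kA^3 + 2304*rt^3*sA*kA^3 + (-1184)*rt^2*sA*kA^3
        + 512*rt^5 + 384*rt^3*kA^2 + (-720)*rt*sA*kA^3 + 192*rt^2*kA^2 + 126*sA*kA^3
        + (-768)*rt^3 + 24*rt*sA*kA + (-408)*rt*kA^2 + (-32)*rt^2 + (-6)*sA*kA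
        + (-180)*kA^2 + 288*rt + 24) * hq0
      + ((-60)*rt^3*kA^2 + 12*rt^2*kA^2 + 12*rt^3 + 42*rt*kA^2 + (-4)*rt^2 + (-8)*rt) * hsA2
      + ((-60)*rt^3*sA*kA^2 + 12*rt^2*sA*kA^2 + 12*rt^3*sA + 24*rt^3*kA + 42*rt*sA*kA^2
        + (-4)*rt^2*sA + (-8)*rt*sA + (-18)*rt*kA) * hkA
  have hφfx : aeval v (pderiv 0 f) = 0 := by
    rw [hfx]
    simp only [map_add, map_sub, map_mul, map_pow, map_neg, map_ofNat, aeval_X, aeval_C,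
      hv0, hv1, hv2, ← hsAdef, map_one]
    linear_combination
      (96*rt^2*kA^2 + (-48)*rt*kA^2 + 12*sA*kA + (-54)*kA^2) * hq0
      + (1*rt^2 + (-2)*rt) * hsA2
      + (24*rt^3*kA + 1*rt^2*sA + (-3)*rt^2*kA + (-2)*rt*sA + (-18)*rt*kA) * hkA
  have hφfy : aeval v (pderiv 1 f) = 0 := by
    rw [hfy]
    simp only [map_add, map_sub, map_mul, map_pow, map_neg, map_ofNat, aeval_X, aeval_C,
      hv0, hv1, hv2, ← hsAdef, map_one]
    linear_combination
      (96*rt^2*sA*kA^2 + (-48)*rt*sA*kA^2 + (-54)*sA*kA^2 + (-12)*kA) * hq0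
      + (24*rt^3*kA + (-3)*rt^2*kA + (-18)*rt*kA) * hsA2
      + (24*rt^3*sA*kA + (-3)*rt^2*sA*kA + (-18)*rt*sA*kA + 3*rt^2) * hkA
  have hφfz : aeval v (pderiv 2 f) = 0 := by
    rw [← unit4.mul_right_eq_zero]
    have h1 : aeval v ((4:MvPolynomial (Fin 3) ℂ)*pderiv 2 f) = (4:AdjoinRoot qp) * aeval v (pderiv 2 f) := by
      rw [map_mul, map_ofNat]
    rw [← h1, hfz4]
    simp only [map_add, map_sub, map_mul, map_pow, map_neg, map_ofNat, aeval_X, aeval_C,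
      hv0, hv1, hv2, ← hsAdef, map_one]
    linear_combination ((-96)*rt^2 + 72 : AdjoinRoot qp) * hq0
  have hJker : ∀ a ∈ J, aeval v a = 0 := by
    intro a ha
    have hle : J ≤ RingHom.ker (MvPolynomial.aeval v : MvPolynomial (Fin 3) ℂ →ₐ[ℂ] AdjoinRoot qp).toRingHom := by
      rw [hJdef, Ideal.span_le]
      intro g hg
      simp only [Set.mem_insert_iff, Set.mem_singleton_iff] at hg
      rcases hg with h | h | h | h <;> subst h <;>
        simp only [RingHom.mem_ker, AlgHom.toRingHom_eq_coe, RingHom.coe_coe]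
      exacts [hφf, hφfx, hφfy, hφfz]
    exact hle ha
  -- the two algebra maps
  have hroot : Polynomial.aeval (Ideal.Quotient.mk J (X 0)) qp = 0 := by
    rw [hqpdef]
    simp only [map_sub, map_mul, map_pow, map_ofNat, Polynomial.aeval_X]
    have : (8:MvPolynomial (Fin 3) ℂ ⧸ J)*(Ideal.Quotient.mk J (X 0))^4 - 6*(Ideal.Quotient.mk J (X 0))^2
        - Ideal.Quotient.mk J (X 0) = Ideal.Quotient.mk J (8*X 0^4 - 6*X 0^2 - X 0) := by
      simp only [map_sub, map_mul, map_pow, map_ofNat]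
    rw [this, Ideal.Quotient.eq_zero_iff_mem]
    exact hqmem
  set down : AdjoinRoot qp →ₐ[ℂ] MvPolynomial (Fin 3) ℂ ⧸ J := AdjoinRoot.liftAlgHom qp (Algebra.ofId ℂ _) (Ideal.Quotient.mk J (X 0)) hroot
    with hdowndef
  set up : (MvPolynomial (Fin 3) ℂ ⧸ J) →ₐ[ℂ] AdjoinRoot qp := Ideal.Quotient.liftₐ J (MvPolynomial.aeval v) hJker
    with hupdef
  have hupmk : ∀ p : MvPolynomial (Fin 3) ℂ, up (Ideal.Quotient.mk J p) = aeval v p := by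
    intro p; rw [hupdef]; exact Ideal.Quotient.liftₐ_apply _ _ _ _
  have hdownroot : down rt = Ideal.Quotient.mk J (X 0) := by
    rw [hdowndef, hrtdef]
    exact AdjoinRoot.liftAlgHom_root qp (Algebra.ofId ℂ _) (Ideal.Quotient.mk J (X 0)) hroot
  have halg : ∀ c : ℂ, (algebraMap ℂ (MvPolynomial (Fin 3) ℂ ⧸ J)) c = Ideal.Quotient.mk J (C c) := by
    intro c; rfl
  have h2 : up.comp down = AlgHom.id ℂ (AdjoinRoot qp) := by
    apply AdjoinRoot.algHom_ext
    rw [AlgHom.comp_apply, ← hrtdef, hdownroot, hupmk, aeval_X, hv0, AlgHom.id_apply]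
  have h1 : down.comp up = AlgHom.id ℂ (MvPolynomial (Fin 3) ℂ ⧸ J) := by
    apply Ideal.Quotient.algHom_ext
    apply MvPolynomial.algHom_ext
    intro i
    fin_cases i
    · show down (up (Ideal.Quotient.mk J (X 0))) = Ideal.Quotient.mk J (X 0)
      rw [hupmk, aeval_X, hv0, hdownroot]
    · show down (up (Ideal.Quotient.mk J (X 1))) = Ideal.Quotient.mk J (X 1)
      rw [hupmk, aeval_X, hv1, ← sub_eq_zero]
      have e : down (kA * (11*rt + 4*rt^2 - 16*rt^3)) - Ideal.Quotient.mk J (X 1)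
          = Ideal.Quotient.mk J (-(X 1 - C (s/3) * (11*X 0 + 4*X 0^2 - 16*X 0^3))) := by
        rw [hkAdef]
        simp only [map_mul, map_add, map_sub, map_pow, map_ofNat, map_neg,
          hdownroot, AlgHom.commutes, halg]
        ring
      rw [e, Ideal.Quotient.eq_zero_iff_mem]
      exact neg_mem hymem
    · show down (up (Ideal.Quotient.mk J (X 2))) = Ideal.Quotient.mk J (X 2)
      rw [hupmk, aeval_X, hv2, ← sub_eq_zero]
      have e : down (2 + 12*rt - 16*rt^3) - Ideal.Quotient.mk J (X 2)
          = Ideal.Quotient.mk J (-(X 2 - (2 + 12*X 0 - 16*X 0^3))) := by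
        simp only [map_mul, map_add, map_sub, map_pow, map_ofNat, map_neg,
          hdownroot, AlgHom.commutes, halg]
        ring
      rw [e, Ideal.Quotient.eq_zero_iff_mem]
      exact neg_mem hzmem
  have iso : (MvPolynomial (Fin 3) ℂ ⧸ J) ≃ₐ[ℂ] AdjoinRoot qp :=
    AlgEquiv.ofAlgHom up down h2 h1
  rw [iso.toLinearEquiv.finrank_eq, (AdjoinRoot.powerBasis hqne).finrank,
    AdjoinRoot.powerBasis_dim, hqdeg]
end
end

section
/- Let u ∈ ℂ satisfy u⁹ = −18, and let a, b ∈ ℂ be the two roots of z² − 3uz + 3u² = 0. Then there exists a constant C ∈ ℂ, C ≠ 0, such that the degree-9 polynomial P defined by P(0) = −1 and P′(z) = C·z²·(z−a)²·(z−b)²·(z−u)² satisfies P(a) = P(b) = −1 and P(u) = 1. In particular P is a Belyi polynomial with exactly two critical values −1 and 1: the critical points 0, a, b (each a zero of P′ of order 2) have critical value −1, and the critical point u (a zero of P′ of order 2) has critical value 1. -/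
noncomputable section

open Polynomial in
/-- For `u` with `u⁹ = -18` and `a, b` the two roots of `z² - 3uz + 3u² = 0`, there is a
nonzero constant `c` such that the degree-9 polynomial `P` with `P(0) = -1` and
`P' = c·z²(z-a)²(z-b)²(z-u)²` satisfies `P(a) = P(b) = -1` and `P(u) = 1`; so `P` is a Belyi
polynomial with critical values `-1` (at the order-2 critical points `0, a, b`) and `1`
(at the order-2 critical point `u`). -/
theorem stmt19 (u a b : ℂ) (hu : u ^ 9 = -18)
    (ha : a ^ 2 - 3 * u * a + 3 * u ^ 2 = 0)
    (hb : b ^ 2 - 3 * u * b + 3 * u ^ 2 = 0) (hab : a ≠ b) :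
    ∃ c : ℂ, c ≠ 0 ∧ ∃ P : Polynomial ℂ,
      P.degree = 9 ∧ P.eval 0 = -1 ∧
      derivative P = Polynomial.C c * (X ^ 2 * (X - Polynomial.C a) ^ 2 *
        (X - Polynomial.C b) ^ 2 * (X - Polynomial.C u) ^ 2) ∧
      P.eval a = -1 ∧ P.eval b = -1 ∧ P.eval u = 1 := by
  have hsum : a + b = 3 * u := by
    have h : (a - b) * (a + b - 3 * u) = 0 := by linear_combination ha - hb
    rcases mul_eq_zero.mp h with h' | h'
    · exact absurd (sub_eq_zero.mp h') hab
    · linear_combination h'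
  have hprod : a * b = 3 * u ^ 2 := by linear_combination a * hsum - ha
  set Q : Polynomial ℂ := X ^ 3 - C (3 * u) * X ^ 2 + C (3 * u ^ 2) * X with hQdef
  have h2 : (X - C a) * (X - C b) = X ^ 2 - C (3 * u) * X + C (3 * u ^ 2) := by
    rw [show (3 : ℂ) * u = a + b from hsum.symm,
      show (3 : ℂ) * u ^ 2 = a * b from hprod.symm, map_add, map_mul]
    ring
  refine ⟨-1, by norm_num, C (-1/9) * Q ^ 3 + C (-1), ?_, ?_, ?_, ?_, ?_, ?_⟩
  · rw [hQdef]
    compute_degree!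
  · simp [hQdef]
  · have h9 : (C (-1/9 : ℂ) : Polynomial ℂ) * 9 = C (-1) := by
      rw [← map_ofNat (Polynomial.C (R := ℂ)) 9, ← map_mul]
      norm_num
    have hQ' : derivative Q = 3 * (X - C u) ^ 2 := by
      simp only [hQdef, derivative_add, derivative_sub, derivative_mul, derivative_C,
        derivative_X_pow, derivative_X, derivative_pow, derivative_ofNat, derivative_one,
        map_mul, map_ofNat, map_pow]
      push_cast
      simp only [map_ofNat]
      ring
    have hder : derivative (C (-1/9 : ℂ) * Q ^ 3 + C (-1)) = C (-1/9) * (3 * Q ^ 2 * derivative Q) := by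
      simp only [derivative_add, derivative_mul, derivative_C, derivative_pow, derivative_X,
        map_mul, map_ofNat, map_pow]
      push_cast
      simp only [map_ofNat]
      ring
    rw [hder, hQ', show Q = X * ((X - C a) * (X - C b)) by rw [hQdef, h2]; ring]
    linear_combination ((X * ((X - C a) * (X - C b))) ^ 2 * (X - C u) ^ 2) * h9
  · simp only [hQdef, eval_add, eval_mul, eval_pow, eval_sub, eval_C, eval_X]
    linear_combination (-1/9 : ℂ) * (a ^ 3 - 3 * u * a ^ 2 + 3 * u ^ 2 * a) ^ 2 * (a * ha)
  · simp only [hQdef, eval_add, eval_mul, eval_pow, eval_sub, eval_C, eval_X]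
    linear_combination (-1/9 : ℂ) * (b ^ 3 - 3 * u * b ^ 2 + 3 * u ^ 2 * b) ^ 2 * (b * hb)
  · simp only [hQdef, eval_add, eval_mul, eval_pow, eval_sub, eval_C, eval_X]
    linear_combination (-1/9 : ℂ) * hu
end
end
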